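/- arXiv:2405.05934 — 10 statements merged into one kernel-verified Lean document; each statement's English description precedes it below -/
import Mathlib

section
/- Fix p ∈ ℕ, group means μ^{(y,d)} ∈ ℝ^p for (y,d) ∈ {0,1} × {S,T} satisfying the mean-structure assumption μ^{(1,S)} − μ^{(0,S)} = μ^{(1,T)} − μ^{(0,T)}; set Δ_D := μ^{(1,S)} − μ^{(0,S)} and Δ_C := μ^{(0,S)} − μ^{(0,T)}. Let Σ ∈ ℝ^{p×p} be symmetric positive definite and for each group let ν^{(y,d)} be a Borel probability measure on ℝ^p with mean μ^{(y,d)} and covariance matrix Σ. Then the downsampled/upweighted risk R(w,b) := (1/4) Σ_{(y,d)} ∫ (y − ⟨w,x⟩ − b)² dν^{(y,d)}(x) has the unique minimizer w* = (1/4)(Σ + (1/4)Δ_C Δ_Cᵀ + (1/4)Δ_D Δ_Dᵀ)⁻¹ Δ_D and b* = 1/2 − (1/2)⟨w*, μ^{(0,T)} + μ^{(1,S)}⟩. -/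
open MeasureTheory Matrix


private lemma pi_abs_le {p : ℕ} (x : Fin p → ℝ) (i : Fin p) : |x i| ≤ ‖x‖ := by
  simpa [Real.norm_eq_abs] using norm_le_pi_norm x i

private lemma integrable_coord {p : ℕ} {ν : Measure (Fin p → ℝ)} [IsProbabilityMeasure ν]
    (hL2 : Integrable (fun x => ‖x‖ ^ 2) ν) (i : Fin p) :
    Integrable (fun x : Fin p → ℝ => x i) ν := by
  have h : Integrable (fun x : Fin p → ℝ => 1 + ‖x‖ ^ 2) ν := (integrable_const 1).add hL2
  refine h.mono ((measurable_pi_apply i).aestronglyMeasurable) ?_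
  filter_upwards with x
  have h1 : |x i| ≤ ‖x‖ := pi_abs_le x i
  have h2 : (0:ℝ) ≤ ‖x‖ := norm_nonneg x
  rw [Real.norm_eq_abs (x i),
    Real.norm_of_nonneg (show (0:ℝ) ≤ 1 + ‖x‖ ^ 2 by positivity)]
  nlinarith [sq_nonneg (‖x‖ - 1)]

private lemma integrable_cov {p : ℕ} {ν : Measure (Fin p → ℝ)} [IsProbabilityMeasure ν]
    (hL2 : Integrable (fun x => ‖x‖ ^ 2) ν) (μ : Fin p → ℝ) (i j : Fin p) :
    Integrable (fun x : Fin p → ℝ => (x i - μ i) * (x j - μ j)) ν := by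
  have h : Integrable (fun x : Fin p → ℝ => (1 + ‖μ‖ + ‖μ‖ ^ 2) * (1 + ‖x‖ ^ 2)) ν :=
    ((integrable_const 1).add hL2).const_mul _
  refine h.mono ?_ ?_
  · exact (((measurable_pi_apply i).sub measurable_const).mul
      ((measurable_pi_apply j).sub measurable_const)).aestronglyMeasurable
  · filter_upwards with x
    have hxi := pi_abs_le x i
    have hxj := pi_abs_le x j
    have hmi : |μ i| ≤ ‖μ‖ := pi_abs_le μ i
    have hmj : |μ j| ≤ ‖μ‖ := pi_abs_le μ j
    have hμ : (0:ℝ) ≤ ‖μ‖ := norm_nonneg μ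
    have hx : (0:ℝ) ≤ ‖x‖ := norm_nonneg x
    rw [Real.norm_eq_abs ((x i - μ i) * (x j - μ j)), abs_mul,
      Real.norm_of_nonneg (show (0:ℝ) ≤ (1 + ‖μ‖ + ‖μ‖ ^ 2) * (1 + ‖x‖ ^ 2) by positivity)]
    have bi : |x i - μ i| ≤ ‖x‖ + ‖μ‖ :=
      (abs_sub _ _).trans (add_le_add hxi hmi)
    have bj : |x j - μ j| ≤ ‖x‖ + ‖μ‖ :=
      (abs_sub _ _).trans (add_le_add hxj hmj)
    calc |x i - μ i| * |x j - μ j| ≤ (‖x‖ + ‖μ‖) * (‖x‖ + ‖μ‖) :=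
          mul_le_mul bi bj (abs_nonneg _) (by positivity)
      _ ≤ (1 + ‖μ‖ + ‖μ‖ ^ 2) * (1 + ‖x‖ ^ 2) := by
          nlinarith [mul_nonneg hμ (sq_nonneg (‖x‖ - 1)), sq_nonneg (‖x‖ * ‖μ‖)]

private lemma dot_vecMulVec {p : ℕ} (u a b v : Fin p → ℝ) :
    u ⬝ᵥ (vecMulVec a b *ᵥ v) = (u ⬝ᵥ a) * (b ⬝ᵥ v) := by
  simp only [dotProduct, mulVec, vecMulVec_apply, Finset.mul_sum, Finset.sum_mul]
  rw [Finset.sum_comm]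
  exact Finset.sum_congr rfl fun i _ => Finset.sum_congr rfl fun j _ => by ring

private lemma dot_mulVec_symm {p : ℕ} (M : Matrix (Fin p) (Fin p) ℝ)
    (hM : ∀ i j, M i j = M j i) (u v : Fin p → ℝ) :
    u ⬝ᵥ (M *ᵥ v) = v ⬝ᵥ (M *ᵥ u) := by
  simp only [dotProduct, mulVec, Finset.mul_sum]
  rw [Finset.sum_comm]
  exact Finset.sum_congr rfl fun i _ => Finset.sum_congr rfl fun j _ => by rw [hM j i]; ring

private lemma aux_integral {p : ℕ} (ν : Measure (Fin p → ℝ)) [IsProbabilityMeasure ν]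
    (μ : Fin p → ℝ) (S : Matrix (Fin p) (Fin p) ℝ)
    (hL2 : Integrable (fun x => ‖x‖ ^ 2) ν)
    (hmean : ∀ i, (∫ x, x i ∂ν) = μ i)
    (hcov : ∀ i j, (∫ x, (x i - μ i) * (x j - μ j) ∂ν) = S i j)
    (w : Fin p → ℝ) (c b : ℝ) :
    (∫ x, (c - w ⬝ᵥ x - b) ^ 2 ∂ν) = w ⬝ᵥ (S *ᵥ w) + (c - w ⬝ᵥ μ - b) ^ 2 := by
  set K : ℝ := (c - w ⬝ᵥ μ - b) ^ 2 with hK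
  set L : ℝ := -(2 * (c - w ⬝ᵥ μ - b)) with hL
  have hpt : ∀ x : Fin p → ℝ, (c - w ⬝ᵥ x - b) ^ 2
      = K + L * (∑ i, w i * (x i - μ i))
        + ∑ i, ∑ j, (w i * w j) * ((x i - μ i) * (x j - μ j)) := by
    intro x
    have h1 : w ⬝ᵥ x = w ⬝ᵥ μ + ∑ i, w i * (x i - μ i) := by
      simp only [dotProduct, mul_sub, Finset.sum_sub_distrib]
      ring
    have h2 : (∑ i, ∑ j, (w i * w j) * ((x i - μ i) * (x j - μ j)))
        = (∑ i, w i * (x i - μ i)) * (∑ j, w j * (x j - μ j)) := by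
      rw [Finset.sum_mul_sum]
      exact Finset.sum_congr rfl fun i _ => Finset.sum_congr rfl fun j _ => by ring
    rw [h2, h1, hK, hL]; ring
  have hIc : ∀ i : Fin p, Integrable (fun x : Fin p → ℝ => w i * (x i - μ i)) ν :=
    fun i => (((integrable_coord hL2 i).sub (integrable_const (μ i))).const_mul (w i))
  have hI1 : Integrable (fun x : Fin p → ℝ => L * ∑ i, w i * (x i - μ i)) ν :=
    (integrable_finset_sum _ fun i _ => hIc i).const_mul L
  have hIp : ∀ i j : Fin p,
      Integrable (fun x : Fin p → ℝ => (w i * w j) * ((x i - μ i) * (x j - μ j))) ν :=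
    fun i j => (integrable_cov hL2 μ i j).const_mul _
  have hI2 : Integrable
      (fun x : Fin p → ℝ => ∑ i, ∑ j, (w i * w j) * ((x i - μ i) * (x j - μ j))) ν :=
    integrable_finset_sum _ fun i _ => integrable_finset_sum _ fun j _ => hIp i j
  have e1 : (∫ x, (∑ i, w i * (x i - μ i)) ∂ν) = 0 := by
    rw [integral_finset_sum _ fun i _ => hIc i]
    refine Finset.sum_eq_zero fun i _ => ?_
    rw [integral_const_mul _ _, integral_sub (integrable_coord hL2 i) (integrable_const _),
      hmean i, integral_const]
    simp
  have e2 : (∫ x, (∑ i, ∑ j, (w i * w j) * ((x i - μ i) * (x j - μ j))) ∂ν)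
      = w ⬝ᵥ (S *ᵥ w) := by
    rw [integral_finset_sum _ fun i _ => integrable_finset_sum _ fun j _ => hIp i j]
    have : ∀ i : Fin p,
        (∫ x, (∑ j, (w i * w j) * ((x i - μ i) * (x j - μ j))) ∂ν)
          = ∑ j, (w i * w j) * S i j := by
      intro i
      rw [integral_finset_sum _ fun j _ => hIp i j]
      exact Finset.sum_congr rfl fun j _ => by rw [integral_const_mul _ _, hcov i j]
    rw [Finset.sum_congr rfl fun i _ => this i]
    simp only [dotProduct, mulVec, Finset.mul_sum]
    exact Finset.sum_congr rfl fun i _ => Finset.sum_congr rfl fun j _ => by ring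
  calc (∫ x, (c - w ⬝ᵥ x - b) ^ 2 ∂ν)
      = ∫ x, (K + L * (∑ i, w i * (x i - μ i))
          + ∑ i, ∑ j, (w i * w j) * ((x i - μ i) * (x j - μ j))) ∂ν := by
        exact integral_congr_ae (Filter.Eventually.of_forall fun x => hpt x)
    _ = (∫ x, (K + L * (∑ i, w i * (x i - μ i))) ∂ν)
        + ∫ x, (∑ i, ∑ j, (w i * w j) * ((x i - μ i) * (x j - μ j))) ∂ν :=
        integral_add ((integrable_const K).add hI1) hI2
    _ = K + L * 0 + w ⬝ᵥ (S *ᵥ w) := by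
        rw [integral_add (integrable_const K) hI1, integral_const, integral_const_mul _ _, e1, e2]
        simp
    _ = w ⬝ᵥ (S *ᵥ w) + (c - w ⬝ᵥ μ - b) ^ 2 := by rw [hK]; ring

/-- Proposition 1: the downsampled/upweighted risk
`R(w,b) = (1/4)·Σ_{(y,d)} ∫ (y − ⟨w,x⟩ − b)² dν^{(y,d)}` over group-conditional laws with
means `μ^{(y,d)}` (forming a parallelogram) and common covariance `Σ` (positive definite)
has the unique minimizer `w* = (1/4)(Σ + (1/4)Δ_CΔ_Cᵀ + (1/4)Δ_DΔ_Dᵀ)⁻¹Δ_D`,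
`b* = 1/2 − (1/2)⟨w*, μ^{(0,T)} + μ^{(1,S)}⟩`. -/
theorem ds_uw_optimal_model
    (p : ℕ) (μ0S μ0T μ1S μ1T : Fin p → ℝ)
    (hmean : μ1S - μ0S = μ1T - μ0T)
    (ΔD ΔC : Fin p → ℝ)
    (hΔD : ΔD = μ1S - μ0S) (hΔC : ΔC = μ0S - μ0T)
    (S : Matrix (Fin p) (Fin p) ℝ) (hS : S.PosDef)
    (ν0S ν0T ν1S ν1T : Measure (Fin p → ℝ))
    [IsProbabilityMeasure ν0S] [IsProbabilityMeasure ν0T]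
    [IsProbabilityMeasure ν1S] [IsProbabilityMeasure ν1T]
    (hint : ∀ ν ∈ [ν0S, ν0T, ν1S, ν1T], Integrable (fun x => ‖x‖ ^ 2) ν)
    (hmeans : (∀ i, (∫ x, x i ∂ν0S) = μ0S i) ∧ (∀ i, (∫ x, x i ∂ν0T) = μ0T i) ∧
              (∀ i, (∫ x, x i ∂ν1S) = μ1S i) ∧ (∀ i, (∫ x, x i ∂ν1T) = μ1T i))
    (hcovs : (∀ i j, (∫ x, (x i - μ0S i) * (x j - μ0S j) ∂ν0S) = S i j) ∧
             (∀ i j, (∫ x, (x i - μ0T i) * (x j - μ0T j) ∂ν0T) = S i j) ∧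
             (∀ i j, (∫ x, (x i - μ1S i) * (x j - μ1S j) ∂ν1S) = S i j) ∧
             (∀ i j, (∫ x, (x i - μ1T i) * (x j - μ1T j) ∂ν1T) = S i j))
    (R : (Fin p → ℝ) → ℝ → ℝ)
    (hR : ∀ w b, R w b = (1/4 : ℝ) *
      ((∫ x, ((0 : ℝ) - w ⬝ᵥ x - b) ^ 2 ∂ν0S) + (∫ x, ((0 : ℝ) - w ⬝ᵥ x - b) ^ 2 ∂ν0T)
        + (∫ x, ((1 : ℝ) - w ⬝ᵥ x - b) ^ 2 ∂ν1S) + (∫ x, ((1 : ℝ) - w ⬝ᵥ x - b) ^ 2 ∂ν1T)))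
    (wstar : Fin p → ℝ)
    (hwstar : wstar = (1/4 : ℝ) •
      ((S + (1/4 : ℝ) • vecMulVec ΔC ΔC + (1/4 : ℝ) • vecMulVec ΔD ΔD)⁻¹ *ᵥ ΔD))
    (bstar : ℝ) (hbstar : bstar = 1/2 - (1/2 : ℝ) * (wstar ⬝ᵥ (μ0T + μ1S))) :
    (∀ w b, R wstar bstar ≤ R w b) ∧
    (∀ w b, R w b = R wstar bstar → w = wstar ∧ b = bstar) := by
  obtain ⟨hm0S, hm0T, hm1S, hm1T⟩ := hmeans
  obtain ⟨hc0S, hc0T, hc1S, hc1T⟩ := hcovs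
  have hL0S : Integrable (fun x => ‖x‖ ^ 2) ν0S := hint ν0S (by simp)
  have hL0T : Integrable (fun x => ‖x‖ ^ 2) ν0T := hint ν0T (by simp)
  have hL1S : Integrable (fun x => ‖x‖ ^ 2) ν1S := hint ν1S (by simp)
  have hL1T : Integrable (fun x => ‖x‖ ^ 2) ν1T := hint ν1T (by simp)
  have hstar : ∀ v : Fin p → ℝ, star v = v := fun v => funext fun i => star_trivial _
  -- vector identities
  have hμ0Seq : μ0S = μ0T + ΔC := by rw [hΔC]; abel
  have hμ1Seq : μ1S = μ0T + ΔC + ΔD := by rw [hΔC, hΔD]; abel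
  have hμ1Teq : μ1T = μ0T + ΔD := by rw [hΔD, hmean]; abel
  -- symmetry of S
  have hSsym : ∀ i j, S i j = S j i := fun i j => by
    have := hS.1.apply i j
    simpa using this.symm
  have hSdotsym := dot_mulVec_symm S hSsym
  -- positive semidefiniteness of the rank-one pieces
  have hpsd : ∀ v : Fin p → ℝ, ((1/4 : ℝ) • vecMulVec v v).PosSemidef := by
    intro v
    refine Matrix.PosSemidef.of_dotProduct_mulVec_nonneg ?_ ?_
    · show ((1/4 : ℝ) • vecMulVec v v)ᴴ = (1/4 : ℝ) • vecMulVec v v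
      ext i j
      simp [vecMulVec_apply, mul_comm]
    · intro x
      rw [hstar x, smul_mulVec, dotProduct_smul, smul_eq_mul, dot_vecMulVec,
        dotProduct_comm v x]
      nlinarith [sq_nonneg (x ⬝ᵥ v)]
  set A : Matrix (Fin p) (Fin p) ℝ :=
    S + (1/4 : ℝ) • vecMulVec ΔC ΔC + (1/4 : ℝ) • vecMulVec ΔD ΔD with hAdef
  have hApos : A.PosDef := (hS.add_posSemidef (hpsd ΔC)).add_posSemidef (hpsd ΔD)
  have hdet : IsUnit A.det := hApos.det_pos.ne'.isUnit
  have hAw : A *ᵥ wstar = (1/4 : ℝ) • ΔD := by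
    rw [hwstar, mulVec_smul, mulVec_mulVec, Matrix.mul_nonsing_inv A hdet, one_mulVec]
  -- constraint equations
  have hC : ∀ u : Fin p → ℝ,
      u ⬝ᵥ (S *ᵥ wstar) + (1/4 : ℝ) * (u ⬝ᵥ ΔC) * (wstar ⬝ᵥ ΔC)
        + (1/4 : ℝ) * (u ⬝ᵥ ΔD) * (wstar ⬝ᵥ ΔD) = (1/4 : ℝ) * (u ⬝ᵥ ΔD) := by
    intro u
    have h2 : u ⬝ᵥ (A *ᵥ wstar) = u ⬝ᵥ ((1/4 : ℝ) • ΔD) := by rw [hAw]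
    rw [hAdef, add_mulVec, add_mulVec, dotProduct_add, dotProduct_add,
      smul_mulVec, smul_mulVec, dotProduct_smul, dotProduct_smul,
      dot_vecMulVec, dot_vecMulVec, dotProduct_smul] at h2
    simp only [smul_eq_mul] at h2
    rw [dotProduct_comm ΔC wstar, dotProduct_comm ΔD wstar] at h2
    linear_combination h2
  -- risk in closed form
  have hRf : ∀ w b, R w b = w ⬝ᵥ (S *ᵥ w) + (1/4 : ℝ) *
      (((0 : ℝ) - (w ⬝ᵥ μ0T + w ⬝ᵥ ΔC) - b) ^ 2 + ((0 : ℝ) - w ⬝ᵥ μ0T - b) ^ 2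
        + ((1 : ℝ) - (w ⬝ᵥ μ0T + w ⬝ᵥ ΔC + w ⬝ᵥ ΔD) - b) ^ 2
        + ((1 : ℝ) - (w ⬝ᵥ μ0T + w ⬝ᵥ ΔD) - b) ^ 2) := by
    intro w b
    rw [hR, aux_integral ν0S μ0S S hL0S hm0S hc0S w 0 b,
      aux_integral ν0T μ0T S hL0T hm0T hc0T w 0 b,
      aux_integral ν1S μ1S S hL1S hm1S hc1S w 1 b,
      aux_integral ν1T μ1T S hL1T hm1T hc1T w 1 b,
      hμ1Seq, hμ1Teq, hμ0Seq]
    simp only [dotProduct_add]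
    ring
  have hbs : bstar = 1/2 - (1/2 : ℝ) * (wstar ⬝ᵥ μ0T
      + (wstar ⬝ᵥ μ0T + wstar ⬝ᵥ ΔC + wstar ⬝ᵥ ΔD)) := by
    rw [hbstar, hμ1Seq]
    simp only [dotProduct_add]
  -- the key decomposition
  have hkey : ∀ w b, R w b = R wstar bstar
      + ((w - wstar) ⬝ᵥ (S *ᵥ (w - wstar)))
      + (1/4 : ℝ) * (w ⬝ᵥ ΔC - wstar ⬝ᵥ ΔC) ^ 2
      + (1/4 : ℝ) * (w ⬝ᵥ ΔD - wstar ⬝ᵥ ΔD) ^ 2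
      + ((b - bstar) + (w ⬝ᵥ μ0T - wstar ⬝ᵥ μ0T)
          + (1/2 : ℝ) * (w ⬝ᵥ ΔC - wstar ⬝ᵥ ΔC)
          + (1/2 : ℝ) * (w ⬝ᵥ ΔD - wstar ⬝ᵥ ΔD)) ^ 2 := by
    intro w b
    have hq : (w - wstar) ⬝ᵥ (S *ᵥ (w - wstar))
        = w ⬝ᵥ (S *ᵥ w) - 2 * (w ⬝ᵥ (S *ᵥ wstar)) + wstar ⬝ᵥ (S *ᵥ wstar) := by
      rw [mulVec_sub, dotProduct_sub, sub_dotProduct, sub_dotProduct,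
        hSdotsym wstar w]
      ring
    rw [hRf w b, hRf wstar bstar, hq, hbs]
    linear_combination (2 : ℝ) * hC w - (2 : ℝ) * hC wstar
  -- positivity facts
  have hq0 : ∀ v : Fin p → ℝ, 0 ≤ v ⬝ᵥ (S *ᵥ v) := fun v => by
    have := hS.posSemidef.dotProduct_mulVec_nonneg v
    rwa [hstar v] at this
  have hqpos : ∀ v : Fin p → ℝ, v ≠ 0 → 0 < v ⬝ᵥ (S *ᵥ v) := fun v hv => by
    have := hS.dotProduct_mulVec_pos hv
    rwa [hstar v] at this
  constructor
  · intro w b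
    have hk := hkey w b
    have h1 := hq0 (w - wstar)
    have h2 := sq_nonneg (w ⬝ᵥ ΔC - wstar ⬝ᵥ ΔC)
    have h3 := sq_nonneg (w ⬝ᵥ ΔD - wstar ⬝ᵥ ΔD)
    have h4 := sq_nonneg ((b - bstar) + (w ⬝ᵥ μ0T - wstar ⬝ᵥ μ0T)
      + (1/2 : ℝ) * (w ⬝ᵥ ΔC - wstar ⬝ᵥ ΔC) + (1/2 : ℝ) * (w ⬝ᵥ ΔD - wstar ⬝ᵥ ΔD))
    linarith
  · intro w b hEq
    have hk := hkey w b
    rw [hEq] at hk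
    have h1 := hq0 (w - wstar)
    have h2 := sq_nonneg (w ⬝ᵥ ΔC - wstar ⬝ᵥ ΔC)
    have h3 := sq_nonneg (w ⬝ᵥ ΔD - wstar ⬝ᵥ ΔD)
    have h4 := sq_nonneg ((b - bstar) + (w ⬝ᵥ μ0T - wstar ⬝ᵥ μ0T)
      + (1/2 : ℝ) * (w ⬝ᵥ ΔC - wstar ⬝ᵥ ΔC) + (1/2 : ℝ) * (w ⬝ᵥ ΔD - wstar ⬝ᵥ ΔD))
    have ht1 : (w - wstar) ⬝ᵥ (S *ᵥ (w - wstar)) = 0 := by linarith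
    have hw : w = wstar := by
      by_contra hne
      exact absurd ht1 (ne_of_gt (hqpos _ (sub_ne_zero.mpr hne)))
    subst hw
    refine ⟨rfl, ?_⟩
    have ht4 : ((b - bstar) + (w ⬝ᵥ μ0T - w ⬝ᵥ μ0T)
        + (1/2 : ℝ) * (w ⬝ᵥ ΔC - w ⬝ᵥ ΔC) + (1/2 : ℝ) * (w ⬝ᵥ ΔD - w ⬝ᵥ ΔD)) ^ 2 = 0 := by
      linarith
    have := pow_eq_zero_iff (n := 2) (by norm_num) |>.mp ht4
    linarith
end

section
/- Fix p ∈ ℕ, group means μ^{(y,d)} ∈ ℝ^p for (y,d) ∈ {0,1} × {S,T} satisfying μ^{(1,S)} − μ^{(0,S)} = μ^{(1,T)} − μ^{(0,T)}, with Δ_D := μ^{(1,S)} − μ^{(0,S)}, Δ_C := μ^{(0,S)} − μ^{(0,T)}, and let Σ ∈ ℝ^{p×p} be symmetric positive definite. Let w ∈ ℝ^p with w ≠ 0 and b := 1/2 − (1/2)⟨w, μ^{(0,T)} + μ^{(1,S)}⟩. Then the per-group Gaussian errors satisfy E^{(0,T)}(w,b) = E^{(1,S)}(w,b) = Φ(−(1/2)⟨w,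 Δ_C + Δ_D⟩ / √(wᵀΣw)) and E^{(0,S)}(w,b) = E^{(1,T)}(w,b) = Φ((1/2)⟨w, Δ_C − Δ_D⟩ / √(wᵀΣw)), and hence WGE(w,b) = max{Φ(−(1/2)⟨w, Δ_C + Δ_D⟩ / √(wᵀΣw)), Φ((1/2)⟨w, Δ_C − Δ_D⟩ / √(wᵀΣw))}. -/
open MeasureTheory ProbabilityTheory Matrix

lemma gauss_affine (m : ℝ) (v : NNReal) (hv : 0 < (v:ℝ)) :
    gaussianReal m v = (gaussianReal 0 1).map (fun x => Real.sqrt v * x + m) := by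
  have hσ : (0:ℝ) < Real.sqrt v := Real.sqrt_pos.mpr hv
  have h1 : (gaussianReal 0 1).map (fun x => Real.sqrt v * x) = gaussianReal 0 v := by
    rw [show (fun x : ℝ => Real.sqrt v * x) = (Real.sqrt v * ·) by rfl,
      gaussianReal_map_const_mul]
    congr 1
    · ring
    · ext
      simp [Real.sq_sqrt hv.le]
  have h2 : (fun x : ℝ => Real.sqrt v * x + m)
      = (fun x => x + m) ∘ (fun x => Real.sqrt v * x) := rfl
  rw [h2, ← Measure.map_map (by fun_prop) (by fun_prop), h1,
    show (fun x : ℝ => x + m) = (· + m) by rfl, gaussianReal_map_add_const, zero_add]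

lemma gauss_le (m t : ℝ) (v : NNReal) (hv : 0 < (v:ℝ)) :
    gaussianReal m v {z | z ≤ t}
      = gaussianReal 0 1 {z | z ≤ (t - m) / Real.sqrt v} := by
  have hσ : (0:ℝ) < Real.sqrt v := Real.sqrt_pos.mpr hv
  have hms : MeasurableSet {z : ℝ | z ≤ t} := measurableSet_Iic
  rw [gauss_affine m v hv, Measure.map_apply (by fun_prop) hms]
  congr 1
  ext x
  simp only [Set.mem_preimage, Set.mem_setOf_eq]
  rw [le_div_iff₀ hσ]
  constructor <;> intro h <;> nlinarith

lemma gauss_gt (m t : ℝ) (v : NNReal) (hv : 0 < (v:ℝ)) :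
    gaussianReal m v {z | t < z}
      = gaussianReal 0 1 {z | z ≤ (m - t) / Real.sqrt v} := by
  have hσ : (0:ℝ) < Real.sqrt v := Real.sqrt_pos.mpr hv
  have hms : MeasurableSet {z : ℝ | t < z} := measurableSet_Ioi
  rw [gauss_affine m v hv, Measure.map_apply (by fun_prop) hms]
  have hpre : (fun x : ℝ => Real.sqrt v * x + m) ⁻¹' {z | t < z}
      = {x : ℝ | (t - m) / Real.sqrt v < x} := by
    ext x
    simp only [Set.mem_preimage, Set.mem_setOf_eq, div_lt_iff₀ hσ]
    constructor <;> intro h <;> nlinarith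
  rw [hpre]
  -- P(Z > u) = P(Z ≤ -u) for standard normal
  set u := (t - m) / Real.sqrt v with hu
  have hneg : (m - t) / Real.sqrt v = -u := by rw [hu]; ring
  rw [hneg]
  have hmap : (gaussianReal 0 1).map (fun x : ℝ => -x) = gaussianReal 0 1 := by
    rw [show (fun x : ℝ => -x) = ((-1 : ℝ) * ·) by ext x; ring, gaussianReal_map_const_mul]
    norm_num
  calc gaussianReal 0 1 {x | u < x}
      = (gaussianReal 0 1).map (fun x : ℝ => -x) {x | u < x} := by rw [hmap]
    _ = gaussianReal 0 1 {x | x < -u} := by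
        have hms2 : MeasurableSet {x : ℝ | u < x} := measurableSet_Ioi
        rw [Measure.map_apply (by fun_prop) hms2]
        congr 1; ext x; simp only [Set.mem_preimage, Set.mem_setOf_eq]; constructor <;> intro h <;> linarith
    _ = gaussianReal 0 1 {x | x ≤ -u} := by
        have h0 : gaussianReal 0 1 {(-u : ℝ)} = 0 :=
          gaussianReal_absolutelyContinuous 0 one_ne_zero (measure_singleton _)
        have hset : {x : ℝ | x ≤ -u} = {x : ℝ | x < -u} ∪ {-u} := by
          ext x; simp only [Set.mem_setOf_eq, Set.union_singleton, Set.mem_insert_iff]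
          rw [le_iff_lt_or_eq]; tauto
        rw [hset]
        refine le_antisymm (measure_mono Set.subset_union_left) ?_
        calc gaussianReal 0 1 ({x : ℝ | x < -u} ∪ {-u})
            ≤ gaussianReal 0 1 {x : ℝ | x < -u} + gaussianReal 0 1 {-u} := measure_union_le _ _
          _ = gaussianReal 0 1 {x : ℝ | x < -u} := by rw [h0, add_zero]


/-- per-group Gaussian errors for a linear model with the "midpoint" intercept.
Under the Gaussian group model `X | (y,d) ~ N(μ^{(y,d)}, Σ)` the statistic `⟨w,X⟩ + b` has law
`gaussianReal(⟨w,μ^{(y,d)}⟩ + b, wᵀΣw)`; with the per-group errors defined accordingly (class 0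
errs when the statistic exceeds 1/2, class 1 errs when it is ≤ 1/2), and
`b = 1/2 − (1/2)⟨w, μ^{(0,T)} + μ^{(1,S)}⟩`, the errors pair up as
`Φ(−(1/2)⟨w, Δ_C + Δ_D⟩/√(wᵀΣw))` and `Φ((1/2)⟨w, Δ_C − Δ_D⟩/√(wᵀΣw))`, and the worst-group
error is their maximum. Here `Φ t = gaussianReal 0 1 {z | z ≤ t}` is the standard normal CDF. -/
theorem per_group_errors_and_wge
    (p : ℕ) (μ0S μ0T μ1S μ1T : Fin p → ℝ)
    (hmean : μ1S - μ0S = μ1T - μ0T)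
    (ΔD ΔC : Fin p → ℝ)
    (hΔD : ΔD = μ1S - μ0S) (hΔC : ΔC = μ0S - μ0T)
    (S : Matrix (Fin p) (Fin p) ℝ) (hS : S.PosDef)
    (w : Fin p → ℝ) (hw : w ≠ 0)
    (b : ℝ) (hb : b = 1/2 - (1/2 : ℝ) * (w ⬝ᵥ (μ0T + μ1S)))
    (Φ : ℝ → ENNReal) (hΦ : ∀ t, Φ t = gaussianReal 0 1 {z | z ≤ t})
    (E0S E0T E1S E1T WGE : ENNReal)
    (hE0S : E0S = gaussianReal (w ⬝ᵥ μ0S + b) (w ⬝ᵥ (S *ᵥ w)).toNNReal {z | 1/2 < z})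
    (hE0T : E0T = gaussianReal (w ⬝ᵥ μ0T + b) (w ⬝ᵥ (S *ᵥ w)).toNNReal {z | 1/2 < z})
    (hE1S : E1S = gaussianReal (w ⬝ᵥ μ1S + b) (w ⬝ᵥ (S *ᵥ w)).toNNReal {z | z ≤ 1/2})
    (hE1T : E1T = gaussianReal (w ⬝ᵥ μ1T + b) (w ⬝ᵥ (S *ᵥ w)).toNNReal {z | z ≤ 1/2})
    (hWGE : WGE = max (max E0S E0T) (max E1S E1T)) :
    E0T = Φ (-(1/2 : ℝ) * (w ⬝ᵥ (ΔC + ΔD)) / Real.sqrt (w ⬝ᵥ (S *ᵥ w))) ∧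
    E1S = Φ (-(1/2 : ℝ) * (w ⬝ᵥ (ΔC + ΔD)) / Real.sqrt (w ⬝ᵥ (S *ᵥ w))) ∧
    E0S = Φ ((1/2 : ℝ) * (w ⬝ᵥ (ΔC - ΔD)) / Real.sqrt (w ⬝ᵥ (S *ᵥ w))) ∧
    E1T = Φ ((1/2 : ℝ) * (w ⬝ᵥ (ΔC - ΔD)) / Real.sqrt (w ⬝ᵥ (S *ᵥ w))) ∧
    WGE = max (Φ (-(1/2 : ℝ) * (w ⬝ᵥ (ΔC + ΔD)) / Real.sqrt (w ⬝ᵥ (S *ᵥ w))))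
              (Φ ((1/2 : ℝ) * (w ⬝ᵥ (ΔC - ΔD)) / Real.sqrt (w ⬝ᵥ (S *ᵥ w)))) := by
  have hpos : 0 < w ⬝ᵥ (S *ᵥ w) := by
    have := hS.dotProduct_mulVec_pos hw
    simpa using this
  have hvc : ((w ⬝ᵥ (S *ᵥ w)).toNNReal : ℝ) = w ⬝ᵥ (S *ᵥ w) := Real.coe_toNNReal _ hpos.le
  have hv : 0 < ((w ⬝ᵥ (S *ᵥ w)).toNNReal : ℝ) := by rw [hvc]; exact hpos
  have hm : w ⬝ᵥ μ1S - w ⬝ᵥ μ0S = w ⬝ᵥ μ1T - w ⬝ᵥ μ0T := by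
    have := congrArg (fun x => w ⬝ᵥ x) hmean
    simpa [dotProduct_sub] using this
  have h0T : E0T = Φ (-(1/2 : ℝ) * (w ⬝ᵥ (ΔC + ΔD)) / Real.sqrt (w ⬝ᵥ (S *ᵥ w))) := by
    rw [hE0T, gauss_gt _ _ _ hv, hΦ, hvc]
    have harg : w ⬝ᵥ μ0T + b - 1/2 = -(1/2 : ℝ) * (w ⬝ᵥ (ΔC + ΔD)) := by
      rw [hb, hΔC, hΔD]
      simp only [dotProduct_add, dotProduct_sub]
      ring
    rw [harg]
  have h1S : E1S = Φ (-(1/2 : ℝ) * (w ⬝ᵥ (ΔC + ΔD)) / Real.sqrt (w ⬝ᵥ (S *ᵥ w))) := by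
    rw [hE1S, gauss_le _ _ _ hv, hΦ, hvc]
    have harg : 1/2 - (w ⬝ᵥ μ1S + b) = -(1/2 : ℝ) * (w ⬝ᵥ (ΔC + ΔD)) := by
      rw [hb, hΔC, hΔD]
      simp only [dotProduct_add, dotProduct_sub]
      ring
    rw [harg]
  have h0S : E0S = Φ ((1/2 : ℝ) * (w ⬝ᵥ (ΔC - ΔD)) / Real.sqrt (w ⬝ᵥ (S *ᵥ w))) := by
    rw [hE0S, gauss_gt _ _ _ hv, hΦ, hvc]
    have harg : w ⬝ᵥ μ0S + b - 1/2 = (1/2 : ℝ) * (w ⬝ᵥ (ΔC - ΔD)) := by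
      rw [hb, hΔC, hΔD]
      simp only [dotProduct_add, dotProduct_sub]
      ring
    rw [harg]
  have h1T : E1T = Φ ((1/2 : ℝ) * (w ⬝ᵥ (ΔC - ΔD)) / Real.sqrt (w ⬝ᵥ (S *ᵥ w))) := by
    rw [hE1T, gauss_le _ _ _ hv, hΦ, hvc]
    have harg : 1/2 - (w ⬝ᵥ μ1T + b) = (1/2 : ℝ) * (w ⬝ᵥ (ΔC - ΔD)) := by
      rw [hb, hΔC, hΔD]
      simp only [dotProduct_add, dotProduct_sub]
      linarith
    rw [harg]
  refine ⟨h0T, h1S, h0S, h1T, ?_⟩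
  rw [hWGE, h0T, h1S, h0S, h1T]
  rw [max_comm (Φ (-(1/2 : ℝ) * (w ⬝ᵥ (ΔC + ΔD)) / Real.sqrt (w ⬝ᵥ (S *ᵥ w))))]
  rw [max_max_max_comm]
  simp [max_self]
end

section
/- Fix p ∈ ℕ, group means μ^{(y,d)} ∈ ℝ^p for (y,d) ∈ {0,1} × {S,T} satisfying μ^{(1,S)} − μ^{(0,S)} = μ^{(1,T)} − μ^{(0,T)}, with Δ_D := μ^{(1,S)} − μ^{(0,S)}, Δ_C := μ^{(0,S)} − μ^{(0,T)}. Let Σ ∈ ℝ^{p×p} be symmetric positive definite, let 0 < π₀ ≤ 1/4 with priors π^{(0,T)} = π^{(1,S)} = π₀, π^{(0,S)} = π^{(1,T)} = 1/2 − π₀, and for each group let ν^{(y,d)} be a Borel probability measure on ℝ^p with mean μ^{(y,d)} and covariance Σ. Then the standard risk R_SRM(w,b) := Σ_{(y,d)} π^{(y,d)} ∫ (y − ⟨w,x⟩ − b)² dν^{(y,d)}(x) has the unique minimizer w*_SRM = (1/4)(Σ + 2π₀(1 − 2π₀) Δ_C Δ_Cᵀ + (1/4) Δ̄ Δ̄ᵀ)⁻¹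 Δ̄ and b*_SRM = 1/2 − (1/2)⟨w*_SRM, μ^{(0,T)} + μ^{(1,S)}⟩, where Δ̄ := Δ_D − (1 − 4π₀) Δ_C. -/
open MeasureTheory Matrix

lemma sq_loss_integral (p : ℕ) (ν : Measure (Fin p → ℝ)) [IsProbabilityMeasure ν]
    (μ : Fin p → ℝ) (S : Matrix (Fin p) (Fin p) ℝ)
    (h2 : Integrable (fun x => ‖x‖ ^ 2) ν)
    (hm : ∀ i, (∫ x, x i ∂ν) = μ i)
    (hc : ∀ i j, (∫ x, (x i - μ i) * (x j - μ j) ∂ν) = S i j)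
    (w : Fin p → ℝ) (c b : ℝ) :
    (∫ x, (c - w ⬝ᵥ x - b) ^ 2 ∂ν) = (c - b - w ⬝ᵥ μ) ^ 2 + w ⬝ᵥ (S *ᵥ w) := by
  have hxi : ∀ i, Integrable (fun x : Fin p → ℝ => x i) ν := by
    intro i
    refine Integrable.mono' (((integrable_const (1:ℝ)).add h2).div_const 2)
      (measurable_pi_apply i).aestronglyMeasurable ?_
    filter_upwards with x
    have h1 : |x i| ≤ ‖x‖ := norm_le_pi_norm x i
    simp only [Real.norm_eq_abs, Pi.add_apply, Pi.div_apply]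
    nlinarith [sq_nonneg (‖x‖ - 1)]
  have hxij : ∀ i j, Integrable (fun x : Fin p → ℝ => x i * x j) ν := by
    intro i j
    refine Integrable.mono' h2
      (((measurable_pi_apply i).mul (measurable_pi_apply j)).aestronglyMeasurable) ?_
    filter_upwards with x
    have h1 : |x i| ≤ ‖x‖ := norm_le_pi_norm x i
    have h1' : |x j| ≤ ‖x‖ := norm_le_pi_norm x j
    rw [Real.norm_eq_abs, abs_mul, sq]
    exact mul_le_mul h1 h1' (abs_nonneg _) (norm_nonneg _)
  have hsec : ∀ i j, (∫ x, x i * x j ∂ν) = S i j + μ i * μ j := by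
    intro i j
    have he : (fun x : Fin p → ℝ => (x i - μ i) * (x j - μ j))
        = fun x => (x i * x j - μ j * x i) - (μ i * x j - μ i * μ j) := by
      funext x; ring
    have hI1 : Integrable (fun x : Fin p → ℝ => x i * x j - μ j * x i) ν :=
      (hxij i j).sub ((hxi i).const_mul (μ j))
    have hI2 : Integrable (fun x : Fin p → ℝ => μ i * x j - μ i * μ j) ν :=
      ((hxi j).const_mul (μ i)).sub (integrable_const _)
    have h1 := hc i j
    rw [he, integral_sub hI1 hI2,
      integral_sub (hxij i j) ((hxi i).const_mul (μ j)),
      integral_sub ((hxi j).const_mul (μ i)) (integrable_const _),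
      integral_const_mul, integral_const_mul, hm, hm, integral_const] at h1
    simp at h1
    linarith
  have hdot : Integrable (fun x : Fin p → ℝ => w ⬝ᵥ x) ν := by
    simp only [dotProduct]
    exact integrable_finset_sum _ (fun i _ => (hxi i).const_mul (w i))
  have hdotint : (∫ x, w ⬝ᵥ x ∂ν) = w ⬝ᵥ μ := by
    simp only [dotProduct]
    rw [integral_finset_sum _ (fun i _ => (hxi i).const_mul (w i))]
    simp [integral_const_mul, hm]
  have hsqe : (fun x : Fin p → ℝ => (w ⬝ᵥ x) ^ 2)
      = fun x => ∑ i, ∑ j, w i * w j * (x i * x j) := by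
    funext x
    simp only [dotProduct, sq, Finset.sum_mul_sum]
    congr 1; funext i; congr 1; funext j; ring
  have hdotsq : Integrable (fun x : Fin p → ℝ => (w ⬝ᵥ x) ^ 2) ν := by
    rw [hsqe]
    exact integrable_finset_sum _ (fun i _ =>
      integrable_finset_sum _ (fun j _ => (hxij i j).const_mul _))
  have hdotsqint : (∫ x, (w ⬝ᵥ x) ^ 2 ∂ν) = w ⬝ᵥ (S *ᵥ w) + (w ⬝ᵥ μ) ^ 2 := by
    rw [hsqe]
    rw [integral_finset_sum _ (fun i _ =>
      integrable_finset_sum _ (fun j _ => (hxij i j).const_mul _))]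
    have : ∀ i ∈ Finset.univ, (∫ x, ∑ j, w i * w j * (x i * x j) ∂ν)
        = ∑ j : Fin p, w i * w j * (S i j + μ i * μ j) := by
      intro i _
      rw [integral_finset_sum _ (fun j _ => (hxij i j).const_mul _)]
      exact Finset.sum_congr rfl (fun j _ => by rw [integral_const_mul, hsec])
    rw [Finset.sum_congr rfl this]
    simp only [dotProduct, mulVec, sq, Finset.sum_mul_sum, Finset.mul_sum, Finset.sum_mul]
    rw [← Finset.sum_add_distrib]
    refine Finset.sum_congr rfl (fun i _ => ?_)
    rw [← Finset.sum_add_distrib]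
    refine Finset.sum_congr rfl (fun j _ => by ring)
  have he : (fun x : Fin p → ℝ => (c - w ⬝ᵥ x - b) ^ 2)
      = fun x => ((c - b) ^ 2 - 2 * (c - b) * (w ⬝ᵥ x)) + (w ⬝ᵥ x) ^ 2 := by
    funext x; ring
  have hI3 : Integrable (fun x : Fin p → ℝ => (c - b) ^ 2 - 2 * (c - b) * (w ⬝ᵥ x)) ν :=
    (integrable_const _).sub (hdot.const_mul _)
  rw [he, integral_add hI3 hdotsq,
    integral_sub (integrable_const _) (hdot.const_mul _), integral_const_mul,
    integral_const, hdotint, hdotsqint]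
  simp
  ring

lemma dot_vecMulVec_mulVec {p : ℕ} (a x y : Fin p → ℝ) :
    x ⬝ᵥ (vecMulVec a a *ᵥ y) = (a ⬝ᵥ x) * (a ⬝ᵥ y) := by
  rw [show (a ⬝ᵥ x) * (a ⬝ᵥ y) = ∑ i, ∑ j, (a i * x i) * (a j * y j) by
    rw [dotProduct, dotProduct, Finset.sum_mul_sum]]
  simp only [dotProduct, mulVec, vecMulVec_apply, Finset.mul_sum]
  exact Finset.sum_congr rfl (fun i _ => Finset.sum_congr rfl (fun j _ => by ring))

lemma vecMulVec_self_transpose {n : ℕ} (a : Fin n → ℝ) :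
    (vecMulVec a a)ᵀ = vecMulVec a a := by
  ext i j
  simp [vecMulVec_apply, Matrix.transpose_apply, mul_comm]

lemma isHermitian_of_transpose {n : ℕ} (M : Matrix (Fin n) (Fin n) ℝ) (h : Mᵀ = M) :
    M.IsHermitian := by
  ext i j
  simpa [Matrix.conjTranspose_apply] using congrFun (congrFun h i) j

lemma dot_mulVec_symm_s9 {p : ℕ} (M : Matrix (Fin p) (Fin p) ℝ) (h : Mᵀ = M)
    (x y : Fin p → ℝ) : x ⬝ᵥ (M *ᵥ y) = y ⬝ᵥ (M *ᵥ x) := by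
  calc x ⬝ᵥ (M *ᵥ y) = (x ᵥ* M) ⬝ᵥ y := dotProduct_mulVec x M y
    _ = (x ᵥ* Mᵀ) ⬝ᵥ y := by rw [h]
    _ = (M *ᵥ x) ⬝ᵥ y := by rw [vecMul_transpose]
    _ = y ⬝ᵥ (M *ᵥ x) := dotProduct_comm _ _

/-- Theorem 2, SRM part: the standard risk
`R_SRM(w,b) = Σ_{(y,d)} π^{(y,d)} ∫ (y − ⟨w,x⟩ − b)² dν^{(y,d)}` with priors
`π^{(0,T)} = π^{(1,S)} = π₀`, `π^{(0,S)} = π^{(1,T)} = 1/2 − π₀`, group means forming a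
parallelogram and common covariance `Σ`, has the unique minimizer
`w*_SRM = (1/4)(Σ + 2π₀(1 − 2π₀)Δ_CΔ_Cᵀ + (1/4)Δ̄Δ̄ᵀ)⁻¹Δ̄`,
`b*_SRM = 1/2 − (1/2)⟨w*_SRM, μ^{(0,T)} + μ^{(1,S)}⟩`, where `Δ̄ = Δ_D − (1 − 4π₀)Δ_C`. -/
theorem srm_optimal_model
    (p : ℕ) (μ0S μ0T μ1S μ1T : Fin p → ℝ)
    (hmean : μ1S - μ0S = μ1T - μ0T)
    (ΔD ΔC Δbar : Fin p → ℝ)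
    (hΔD : ΔD = μ1S - μ0S) (hΔC : ΔC = μ0S - μ0T)
    (π₀ : ℝ) (hπ₀pos : 0 < π₀) (hπ₀le : π₀ ≤ 1/4)
    (hΔbar : Δbar = ΔD - (1 - 4 * π₀) • ΔC)
    (S : Matrix (Fin p) (Fin p) ℝ) (hS : S.PosDef)
    (ν0S ν0T ν1S ν1T : Measure (Fin p → ℝ))
    [IsProbabilityMeasure ν0S] [IsProbabilityMeasure ν0T]
    [IsProbabilityMeasure ν1S] [IsProbabilityMeasure ν1T]
    (hint : ∀ ν ∈ [ν0S, ν0T, ν1S, ν1T], Integrable (fun x => ‖x‖ ^ 2) ν)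
    (hmeans : (∀ i, (∫ x, x i ∂ν0S) = μ0S i) ∧ (∀ i, (∫ x, x i ∂ν0T) = μ0T i) ∧
              (∀ i, (∫ x, x i ∂ν1S) = μ1S i) ∧ (∀ i, (∫ x, x i ∂ν1T) = μ1T i))
    (hcovs : (∀ i j, (∫ x, (x i - μ0S i) * (x j - μ0S j) ∂ν0S) = S i j) ∧
             (∀ i j, (∫ x, (x i - μ0T i) * (x j - μ0T j) ∂ν0T) = S i j) ∧
             (∀ i j, (∫ x, (x i - μ1S i) * (x j - μ1S j) ∂ν1S) = S i j) ∧
             (∀ i j, (∫ x, (x i - μ1T i) * (x j - μ1T j) ∂ν1T) = S i j))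
    (R : (Fin p → ℝ) → ℝ → ℝ)
    (hR : ∀ w b, R w b =
      (1/2 - π₀) * (∫ x, ((0 : ℝ) - w ⬝ᵥ x - b) ^ 2 ∂ν0S)
        + π₀ * (∫ x, ((0 : ℝ) - w ⬝ᵥ x - b) ^ 2 ∂ν0T)
        + π₀ * (∫ x, ((1 : ℝ) - w ⬝ᵥ x - b) ^ 2 ∂ν1S)
        + (1/2 - π₀) * (∫ x, ((1 : ℝ) - w ⬝ᵥ x - b) ^ 2 ∂ν1T))
    (wstar : Fin p → ℝ)
    (hwstar : wstar = (1/4 : ℝ) •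
      ((S + (2 * π₀ * (1 - 2 * π₀)) • vecMulVec ΔC ΔC
          + (1/4 : ℝ) • vecMulVec Δbar Δbar)⁻¹ *ᵥ Δbar))
    (bstar : ℝ) (hbstar : bstar = 1/2 - (1/2 : ℝ) * (wstar ⬝ᵥ (μ0T + μ1S))) :
    (∀ w b, R wstar bstar ≤ R w b) ∧
    (∀ w b, R w b = R wstar bstar → w = wstar ∧ b = bstar) := by
  obtain ⟨hm0S, hm0T, hm1S, hm1T⟩ := hmeans
  obtain ⟨hc0S, hc0T, hc1S, hc1T⟩ := hcovs
  set A : Matrix (Fin p) (Fin p) ℝ :=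
    S + (2 * π₀ * (1 - 2 * π₀)) • vecMulVec ΔC ΔC
      + (1/4 : ℝ) • vecMulVec Δbar Δbar with hAdef
  have hstar : ∀ v : Fin p → ℝ, star v = v := fun v => funext fun i => star_trivial _
  have hST : Sᵀ = S := by
    ext i j
    simpa [Matrix.conjTranspose_apply] using (congrFun (congrFun hS.1.symm i) j).symm
  have hbil : ∀ x y : Fin p → ℝ, x ⬝ᵥ (A *ᵥ y)
      = x ⬝ᵥ (S *ᵥ y) + (2 * π₀ * (1 - 2 * π₀)) * ((ΔC ⬝ᵥ x) * (ΔC ⬝ᵥ y))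
        + (1/4) * ((Δbar ⬝ᵥ x) * (Δbar ⬝ᵥ y)) := by
    intro x y
    rw [hAdef]
    simp only [add_mulVec, smul_mulVec, dotProduct_add, dotProduct_smul,
      smul_eq_mul, dot_vecMulVec_mulVec]
  have halpha : 0 ≤ 2 * π₀ * (1 - 2 * π₀) := by nlinarith
  have hAT : Aᵀ = A := by
    rw [hAdef]
    simp [Matrix.transpose_add, Matrix.transpose_smul, vecMulVec_self_transpose, hST]
  have hApd : A.PosDef := by
    refine Matrix.PosDef.of_dotProduct_mulVec_pos ?_ ?_
    · exact isHermitian_of_transpose A hAT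
    · intro x hx
      rw [hstar, hbil]
      have h1 := hS.dotProduct_mulVec_pos hx
      rw [hstar] at h1
      nlinarith [mul_self_nonneg (ΔC ⬝ᵥ x), mul_self_nonneg (Δbar ⬝ᵥ x)]
  have hdet : IsUnit A.det := (hApd.det_pos).ne'.isUnit
  have hAw : A *ᵥ wstar = (1/4 : ℝ) • Δbar := by
    rw [hwstar, Matrix.mulVec_smul, Matrix.mulVec_mulVec,
      Matrix.mul_nonsing_inv _ hdet, Matrix.one_mulVec]
  have RF : ∀ v c, R v c
      = (1/2 - π₀) * (0 - c - v ⬝ᵥ μ0S) ^ 2 + π₀ * (0 - c - v ⬝ᵥ μ0T) ^ 2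
        + π₀ * (1 - c - v ⬝ᵥ μ1S) ^ 2 + (1/2 - π₀) * (1 - c - v ⬝ᵥ μ1T) ^ 2
        + v ⬝ᵥ (S *ᵥ v) := by
    intro v c
    rw [hR,
      sq_loss_integral p ν0S μ0S S (hint ν0S (by simp)) hm0S hc0S v 0 c,
      sq_loss_integral p ν0T μ0T S (hint ν0T (by simp)) hm0T hc0T v 0 c,
      sq_loss_integral p ν1S μ1S S (hint ν1S (by simp)) hm1S hc1S v 1 c,
      sq_loss_integral p ν1T μ1T S (hint ν1T (by simp)) hm1T hc1T v 1 c]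
    ring
  have e1T : ∀ v : Fin p → ℝ, v ⬝ᵥ μ1T = v ⬝ᵥ μ1S - v ⬝ᵥ μ0S + v ⬝ᵥ μ0T := by
    intro v
    have h : μ1T = μ1S - μ0S + μ0T := by
      funext i
      have := congrFun hmean i
      simp only [Pi.sub_apply, Pi.add_apply] at this ⊢
      linarith
    rw [h, dotProduct_add, dotProduct_sub]
  have ecv : ∀ v : Fin p → ℝ, ΔC ⬝ᵥ v = v ⬝ᵥ μ0S - v ⬝ᵥ μ0T := by
    intro v
    rw [hΔC, sub_dotProduct, dotProduct_comm μ0S v, dotProduct_comm μ0T v]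
  have ecd : ∀ v : Fin p → ℝ, Δbar ⬝ᵥ v
      = (v ⬝ᵥ μ1S - v ⬝ᵥ μ0S) - (1 - 4 * π₀) * (v ⬝ᵥ μ0S - v ⬝ᵥ μ0T) := by
    intro v
    rw [hΔbar, hΔD, hΔC, sub_dotProduct, smul_dotProduct, sub_dotProduct,
      sub_dotProduct, smul_eq_mul, dotProduct_comm μ1S v, dotProduct_comm μ0S v,
      dotProduct_comm μ0T v]
  have key : ∀ w b, R w b = R wstar bstar + (w - wstar) ⬝ᵥ (A *ᵥ (w - wstar))
      + (1/2 - b - (1/2) * (w ⬝ᵥ μ0T + w ⬝ᵥ μ1S)) ^ 2 := by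
    intro w b
    have hsym : wstar ⬝ᵥ (S *ᵥ w) = w ⬝ᵥ (S *ᵥ wstar) := dot_mulVec_symm_s9 S hST wstar w
    have equad : (w - wstar) ⬝ᵥ (A *ᵥ (w - wstar))
        = (w ⬝ᵥ (S *ᵥ w) - 2 * (w ⬝ᵥ (S *ᵥ wstar)) + wstar ⬝ᵥ (S *ᵥ wstar))
          + (2 * π₀ * (1 - 2 * π₀)) * ((w ⬝ᵥ μ0S - w ⬝ᵥ μ0T)
              - (wstar ⬝ᵥ μ0S - wstar ⬝ᵥ μ0T)) ^ 2
          + (1/4) * (((w ⬝ᵥ μ1S - w ⬝ᵥ μ0S) - (1 - 4 * π₀) * (w ⬝ᵥ μ0S - w ⬝ᵥ μ0T))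
              - ((wstar ⬝ᵥ μ1S - wstar ⬝ᵥ μ0S)
                - (1 - 4 * π₀) * (wstar ⬝ᵥ μ0S - wstar ⬝ᵥ μ0T))) ^ 2 := by
      rw [hbil, ecv, ecd]
      simp only [Matrix.mulVec_sub, dotProduct_sub, sub_dotProduct]
      rw [hsym]
      ring
    have hC2 : w ⬝ᵥ (S *ᵥ wstar)
        + (2 * π₀ * (1 - 2 * π₀)) * ((w ⬝ᵥ μ0S - w ⬝ᵥ μ0T)
            * (wstar ⬝ᵥ μ0S - wstar ⬝ᵥ μ0T))
        + (1/4) * (((w ⬝ᵥ μ1S - w ⬝ᵥ μ0S) - (1 - 4 * π₀) * (w ⬝ᵥ μ0S - w ⬝ᵥ μ0T))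
            * ((wstar ⬝ᵥ μ1S - wstar ⬝ᵥ μ0S)
              - (1 - 4 * π₀) * (wstar ⬝ᵥ μ0S - wstar ⬝ᵥ μ0T)))
        = (1/4) * ((w ⬝ᵥ μ1S - w ⬝ᵥ μ0S)
            - (1 - 4 * π₀) * (w ⬝ᵥ μ0S - w ⬝ᵥ μ0T)) := by
      have h := congrArg (fun v => w ⬝ᵥ v) hAw
      rw [hbil, ecv, ecv, ecd, ecd, dotProduct_smul, smul_eq_mul,
        dotProduct_comm w Δbar, ecd] at h
      linear_combination h
    have hC3 : wstar ⬝ᵥ (S *ᵥ wstar)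
        + (2 * π₀ * (1 - 2 * π₀)) * ((wstar ⬝ᵥ μ0S - wstar ⬝ᵥ μ0T)
            * (wstar ⬝ᵥ μ0S - wstar ⬝ᵥ μ0T))
        + (1/4) * (((wstar ⬝ᵥ μ1S - wstar ⬝ᵥ μ0S)
              - (1 - 4 * π₀) * (wstar ⬝ᵥ μ0S - wstar ⬝ᵥ μ0T))
            * ((wstar ⬝ᵥ μ1S - wstar ⬝ᵥ μ0S)
              - (1 - 4 * π₀) * (wstar ⬝ᵥ μ0S - wstar ⬝ᵥ μ0T)))
        = (1/4) * ((wstar ⬝ᵥ μ1S - wstar ⬝ᵥ μ0S)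
            - (1 - 4 * π₀) * (wstar ⬝ᵥ μ0S - wstar ⬝ᵥ μ0T)) := by
      have h := congrArg (fun v => wstar ⬝ᵥ v) hAw
      rw [hbil, ecv, ecd, dotProduct_smul, smul_eq_mul,
        dotProduct_comm wstar Δbar, ecd] at h
      linear_combination h
    have hbs : bstar = 1/2 - (1/2) * (wstar ⬝ᵥ μ0T + wstar ⬝ᵥ μ1S) := by
      rw [hbstar, dotProduct_add]
    rw [RF w b, RF wstar bstar, equad, e1T w, e1T wstar, hbs]
    linear_combination 2 * hC2 - 2 * hC3
  have hquadnn : ∀ w : Fin p → ℝ, 0 ≤ (w - wstar) ⬝ᵥ (A *ᵥ (w - wstar)) := by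
    intro w
    rcases eq_or_ne w wstar with h | h
    · simp [h]
    · have := hApd.dotProduct_mulVec_pos (sub_ne_zero.mpr h)
      rw [hstar] at this
      linarith
  constructor
  · intro w b
    rw [key w b]
    have h2 := sq_nonneg (1/2 - b - (1/2) * (w ⬝ᵥ μ0T + w ⬝ᵥ μ1S))
    linarith [hquadnn w]
  · intro w b h
    rw [key w b] at h
    have h1 := hquadnn w
    have h2 := sq_nonneg (1/2 - b - (1/2) * (w ⬝ᵥ μ0T + w ⬝ᵥ μ1S))
    have hq0 : (w - wstar) ⬝ᵥ (A *ᵥ (w - wstar)) = 0 := by linarith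
    have hw : w = wstar := by
      by_contra hne
      have := hApd.dotProduct_mulVec_pos (sub_ne_zero.mpr hne)
      rw [hstar] at this
      linarith
    refine ⟨hw, ?_⟩
    have hs0 : (1/2 - b - (1/2) * (w ⬝ᵥ μ0T + w ⬝ᵥ μ1S)) ^ 2 = 0 := by linarith
    have hs0' : 1/2 - b - (1/2) * (w ⬝ᵥ μ0T + w ⬝ᵥ μ1S) = 0 := by
      exact pow_eq_zero_iff (by norm_num) |>.mp hs0
    rw [hw] at hs0'
    have hbs : bstar = 1/2 - (1/2) * (wstar ⬝ᵥ μ0T + wstar ⬝ᵥ μ1S) := by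
      rw [hbstar, dotProduct_add]
    linarith
end

section
/- Fix p ∈ ℕ, group means μ^{(y,d)} ∈ ℝ^p for (y,d) ∈ {0,1} × {S,T} satisfying μ^{(1,S)} − μ^{(0,S)} = μ^{(1,T)} − μ^{(0,T)}, with Δ_D := μ^{(1,S)} − μ^{(0,S)}, Δ_C := μ^{(0,S)} − μ^{(0,T)}, and let Σ ∈ ℝ^{p×p} be symmetric positive definite. For each group let ν^{(y,d)} be a Borel probability measure on ℝ^p with mean μ^{(y,d)} and covariance Σ. Let μ_Λ be a Borel probability measure on ℝ supported in [0,1] with ∫ λ dμ_Λ = 1/2, and set s := ∫ λ² dμ_Λ. For y ∈ {0,1} let ρ_y be the pushforward of the product measure ν^{(y,S)} ⊗ ν^{(y,T)} ⊗ μ_Λ under the map (x₁, x₂, λ) ↦ λx₁ + (1 − λ)x₂. Then the intra-class domain mixup risk R_MU(w,b) := (1/2) ∫ (0 − ⟨w,x⟩ − b)² dρ₀(x) + (1/2) ∫ (1 − ⟨w,x⟩ − b)² dρ₁(x) has the unique minimizer w*_MU = (1/4)(2s·Σ + (s − 1/4)·Δ_C Δ_Cᵀ + (1/4) Δ_D Δ_Dᵀ)⁻¹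 Δ_D and b*_MU = 1/2 − (1/2)⟨w*_MU, μ^{(0,T)} + μ^{(1,S)}⟩. -/
open MeasureTheory Matrix



section MUaux
variable {p : ℕ}

lemma mu_cont_dot (w : Fin p → ℝ) : Continuous fun x : Fin p → ℝ => w ⬝ᵥ x := by
  simp only [dotProduct]
  exact continuous_finset_sum _ fun i _ => continuous_const.mul (continuous_apply i)

lemma mu_int_coord (ν : Measure (Fin p → ℝ)) [IsProbabilityMeasure ν]
    (hi : Integrable (fun x => ‖x‖ ^ 2) ν) (i : Fin p) :
    Integrable (fun x => x i) ν := by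
  refine Integrable.mono' ((integrable_const (1:ℝ)).add hi) (measurable_pi_apply i).aestronglyMeasurable ?_
  filter_upwards with x
  have h1 : ‖x i‖ ≤ ‖x‖ := norm_le_pi_norm x i
  have h2 : ‖x‖ ≤ 1 + ‖x‖ ^ 2 := by nlinarith [norm_nonneg x, sq_nonneg (‖x‖ - 1)]
  calc ‖x i‖ ≤ ‖x‖ := h1
    _ ≤ 1 + ‖x‖ ^ 2 := h2

lemma mu_int_coord2 (ν : Measure (Fin p → ℝ)) [IsProbabilityMeasure ν]
    (hi : Integrable (fun x => ‖x‖ ^ 2) ν) (i j : Fin p) :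
    Integrable (fun x => x i * x j) ν := by
  refine Integrable.mono' hi ((measurable_pi_apply i).mul (measurable_pi_apply j)).aestronglyMeasurable ?_
  filter_upwards with x
  have h1 : ‖x i‖ ≤ ‖x‖ := norm_le_pi_norm x i
  have h2 : ‖x j‖ ≤ ‖x‖ := norm_le_pi_norm x j
  have := norm_nonneg (x i)
  have := norm_nonneg (x j)
  calc ‖x i * x j‖ = ‖x i‖ * ‖x j‖ := norm_mul _ _
    _ ≤ ‖x‖ * ‖x‖ := by apply mul_le_mul h1 h2 (norm_nonneg _) (norm_nonneg _)
    _ = ‖x‖ ^ 2 := (sq ‖x‖).symm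

lemma mu_int_dot (ν : Measure (Fin p → ℝ)) [IsProbabilityMeasure ν]
    (hi : Integrable (fun x => ‖x‖ ^ 2) ν) (w : Fin p → ℝ) :
    Integrable (fun x => w ⬝ᵥ x) ν := by
  simp only [dotProduct]
  exact integrable_finset_sum _ fun i _ => (mu_int_coord ν hi i).const_mul (w i)

lemma mu_int_dot2 (ν : Measure (Fin p → ℝ)) [IsProbabilityMeasure ν]
    (hi : Integrable (fun x => ‖x‖ ^ 2) ν) (w : Fin p → ℝ) :
    Integrable (fun x => (w ⬝ᵥ x) ^ 2) ν := by
  have hmeas : AEStronglyMeasurable (fun x => (w ⬝ᵥ x) ^ 2) ν :=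
    ((mu_cont_dot w).pow 2).aestronglyMeasurable
  refine Integrable.mono' (hi.const_mul ((∑ i, |w i|) ^ 2)) hmeas ?_
  filter_upwards with x
  have hb : |w ⬝ᵥ x| ≤ (∑ i, |w i|) * ‖x‖ := by
    calc |w ⬝ᵥ x| ≤ ∑ i, |w i * x i| := Finset.abs_sum_le_sum_abs _ _
      _ ≤ ∑ i, |w i| * ‖x‖ := by
          refine Finset.sum_le_sum fun i _ => ?_
          rw [abs_mul]
          exact mul_le_mul_of_nonneg_left (by simpa [Real.norm_eq_abs] using norm_le_pi_norm x i) (abs_nonneg _)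
      _ = (∑ i, |w i|) * ‖x‖ := by rw [Finset.sum_mul]
  have hx : (0:ℝ) ≤ ‖x‖ := norm_nonneg x
  have : ‖(w ⬝ᵥ x) ^ 2‖ = |w ⬝ᵥ x| ^ 2 := by rw [Real.norm_eq_abs, ← abs_pow, abs_sq]
  rw [this]
  have h2 : |w ⬝ᵥ x| ^ 2 ≤ ((∑ i, |w i|) * ‖x‖) ^ 2 := by
    apply pow_le_pow_left₀ (abs_nonneg _) hb
  calc |w ⬝ᵥ x| ^ 2 ≤ ((∑ i, |w i|) * ‖x‖) ^ 2 := h2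
    _ = (∑ i, |w i|) ^ 2 * ‖x‖ ^ 2 := by ring

end MUaux


section MUaux2
variable {p : ℕ}

lemma mu_mean_dot (ν : Measure (Fin p → ℝ)) [IsProbabilityMeasure ν]
    (hi : Integrable (fun x => ‖x‖ ^ 2) ν) (μ : Fin p → ℝ)
    (hm : ∀ i, (∫ x, x i ∂ν) = μ i) (w : Fin p → ℝ) :
    ∫ x, w ⬝ᵥ x ∂ν = w ⬝ᵥ μ := by
  simp only [dotProduct]
  rw [integral_finset_sum _ fun i _ => (mu_int_coord ν hi i).const_mul (w i)]
  refine Finset.sum_congr rfl fun i _ => ?_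
  rw [integral_const_mul, hm i]

lemma mu_sec_dot (ν : Measure (Fin p → ℝ)) [IsProbabilityMeasure ν]
    (hi : Integrable (fun x => ‖x‖ ^ 2) ν) (μ : Fin p → ℝ) (S : Matrix (Fin p) (Fin p) ℝ)
    (hm : ∀ i, (∫ x, x i ∂ν) = μ i)
    (hc : ∀ i j, (∫ x, (x i - μ i) * (x j - μ j) ∂ν) = S i j) (w : Fin p → ℝ) :
    ∫ x, (w ⬝ᵥ x) ^ 2 ∂ν = w ⬝ᵥ (S *ᵥ w) + (w ⬝ᵥ μ) ^ 2 := by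
  have hij : ∀ i j, (∫ x, x i * x j ∂ν) = S i j + μ i * μ j := by
    intro i j
    have hsum : Integrable (fun x : Fin p → ℝ => μ i * x j + μ j * x i) ν := by
      exact ((mu_int_coord ν hi j).const_mul (μ i)).add ((mu_int_coord ν hi i).const_mul (μ j))
    have hIntlin : Integrable (fun x : Fin p → ℝ => μ i * x j + μ j * x i - μ i * μ j) ν := by
      exact hsum.sub (integrable_const _)
    have hlin : ∫ x, (μ i * x j + μ j * x i - μ i * μ j) ∂ν = μ i * μ j := by
      rw [integral_sub hsum (integrable_const _),
          integral_add ((mu_int_coord ν hi j).const_mul (μ i))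
            ((mu_int_coord ν hi i).const_mul (μ j)),
          integral_const_mul, integral_const_mul, hm i, hm j, integral_const]
      simp only [measure_univ, probReal_univ, ENNReal.toReal_one, smul_eq_mul, one_mul]
      ring
    have this0 := hc i j
    have e : (fun x : Fin p → ℝ => (x i - μ i) * (x j - μ j))
        = fun x => x i * x j - (μ i * x j + μ j * x i - μ i * μ j) := funext fun x => by ring
    rw [e, integral_sub (mu_int_coord2 ν hi i j) hIntlin, hlin] at this0
    linarith
  have hpt2 : ∀ x : Fin p → ℝ, (w ⬝ᵥ x) ^ 2 = ∑ i, ∑ j, (w i * w j) * (x i * x j) := by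
    intro x
    simp only [dotProduct, sq, Finset.sum_mul_sum]
    exact Finset.sum_congr rfl fun i _ => Finset.sum_congr rfl fun j _ => by ring
  rw [show (fun x : Fin p → ℝ => (w ⬝ᵥ x) ^ 2)
      = fun x => ∑ i, ∑ j, (w i * w j) * (x i * x j) from funext hpt2]
  rw [integral_finset_sum _ fun i _ => integrable_finset_sum _
      fun j _ => (mu_int_coord2 ν hi i j).const_mul _]
  have key : ∀ i ∈ Finset.univ, (∫ x, ∑ j, (w i * w j) * (x i * x j) ∂ν)
      = ∑ j, (w i * w j) * (S i j + μ i * μ j) := by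
    intro i _
    rw [integral_finset_sum _ fun j _ => (mu_int_coord2 ν hi i j).const_mul _]
    exact Finset.sum_congr rfl fun j _ => by rw [integral_const_mul, hij i j]
  rw [Finset.sum_congr rfl key]
  simp only [dotProduct, mulVec, sq, Finset.sum_mul_sum, Finset.mul_sum]
  rw [← Finset.sum_add_distrib]
  refine Finset.sum_congr rfl fun i _ => ?_
  rw [Finset.sum_mul, ← Finset.sum_add_distrib]
  refine Finset.sum_congr rfl fun j _ => by ring

end MUaux2


section Trip
variable {α β γ : Type*} [MeasurableSpace α] [MeasurableSpace β] [MeasurableSpace γ]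
  {μ1 : Measure α} {μ2 : Measure β} {μ3 : Measure γ}

lemma mu_triple_integral [SFinite μ1] [SFinite μ2] [SFinite μ3]
    (f : α → ℝ) (g : β → ℝ) (h : γ → ℝ) :
    ∫ q : α × β × γ, f q.1 * (g q.2.1 * h q.2.2) ∂(μ1.prod (μ2.prod μ3)) =
      (∫ x, f x ∂μ1) * ((∫ y, g y ∂μ2) * (∫ z, h z ∂μ3)) := by
  rw [integral_prod_mul f (fun y : β × γ => g y.1 * h y.2), integral_prod_mul]

lemma mu_triple_integrable [SFinite μ2] [SFinite μ3]
    {f : α → ℝ} {g : β → ℝ} {h : γ → ℝ}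
    (hf : Integrable f μ1) (hg : Integrable g μ2) (hh : Integrable h μ3) :
    Integrable (fun q : α × β × γ => f q.1 * (g q.2.1 * h q.2.2)) (μ1.prod (μ2.prod μ3)) :=
  hf.mul_prod (hg.mul_prod hh)

end Trip

lemma mu_lambda_int {μΛ : Measure ℝ} [IsProbabilityMeasure μΛ]
    (hsupp : ∀ᵐ l ∂μΛ, l ∈ Set.Icc (0 : ℝ) 1) (n : ℕ) :
    Integrable (fun l : ℝ => l ^ n) μΛ := by
  refine Integrable.mono' (integrable_const (1:ℝ)) (measurable_id.pow_const n).aestronglyMeasurable ?_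
  filter_upwards [hsupp] with l hl
  rw [Real.norm_eq_abs, abs_pow]
  calc |l| ^ n ≤ 1 ^ n := pow_le_pow_left₀ (abs_nonneg l) (abs_le.2 ⟨by linarith [hl.1], hl.2⟩) n
    _ = 1 := one_pow n

lemma mu_key_integral (p : ℕ) (w μa μb : Fin p → ℝ) (S : Matrix (Fin p) (Fin p) ℝ)
    (νa νb : Measure (Fin p → ℝ)) [IsProbabilityMeasure νa] [IsProbabilityMeasure νb]
    (hia : Integrable (fun x => ‖x‖ ^ 2) νa) (hib : Integrable (fun x => ‖x‖ ^ 2) νb)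
    (hma : ∀ i, (∫ x, x i ∂νa) = μa i) (hmb : ∀ i, (∫ x, x i ∂νb) = μb i)
    (hca : ∀ i j, (∫ x, (x i - μa i) * (x j - μa j) ∂νa) = S i j)
    (hcb : ∀ i j, (∫ x, (x i - μb i) * (x j - μb j) ∂νb) = S i j)
    (μΛ : Measure ℝ) [IsProbabilityMeasure μΛ]
    (hsupp : ∀ᵐ l ∂μΛ, l ∈ Set.Icc (0 : ℝ) 1)
    (hΛmean : ∫ l, l ∂μΛ = 1/2) (s : ℝ) (hs : s = ∫ l, l ^ 2 ∂μΛ)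
    (c b : ℝ) :
    ∫ x, (c - w ⬝ᵥ x - b) ^ 2
      ∂(Measure.map (fun q : (Fin p → ℝ) × (Fin p → ℝ) × ℝ => q.2.2 • q.1 + (1 - q.2.2) • q.2.1)
        (νa.prod (νb.prod μΛ)))
    = (c - b) ^ 2 + 2 * s * (w ⬝ᵥ (S *ᵥ w)) + s * ((w ⬝ᵥ μa) ^ 2 + (w ⬝ᵥ μb) ^ 2)
      + (1 - 2 * s) * (w ⬝ᵥ μa) * (w ⬝ᵥ μb) - (c - b) * ((w ⬝ᵥ μa) + (w ⬝ᵥ μb)) := by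
  have hl1 : Integrable (fun l : ℝ => l) μΛ := by
    simpa using mu_lambda_int hsupp 1
  have hl2 : Integrable (fun l : ℝ => l ^ 2) μΛ := mu_lambda_int hsupp 2
  -- map step
  have hT : Continuous fun q : (Fin p → ℝ) × (Fin p → ℝ) × ℝ =>
      q.2.2 • q.1 + (1 - q.2.2) • q.2.1 := by fun_prop
  have hf : Continuous fun x : Fin p → ℝ => (c - w ⬝ᵥ x - b) ^ 2 := by
    have := mu_cont_dot w
    fun_prop
  rw [integral_map hT.aemeasurable hf.aestronglyMeasurable]
  -- pointwise expansion
  set d : ℝ := c - b with hd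
  have hpt : ∀ q : (Fin p → ℝ) × (Fin p → ℝ) × ℝ,
      (c - w ⬝ᵥ (q.2.2 • q.1 + (1 - q.2.2) • q.2.1) - b) ^ 2 =
        d ^ 2 * (1 * 1)
      + (w ⬝ᵥ q.1) ^ 2 * (1 * q.2.2 ^ 2)
      + 1 * ((w ⬝ᵥ q.2.1) ^ 2 * (1 - q.2.2) ^ 2)
      + w ⬝ᵥ q.1 * (1 * (-2 * d * q.2.2))
      + 1 * (w ⬝ᵥ q.2.1 * (-2 * d * (1 - q.2.2)))
      + w ⬝ᵥ q.1 * (w ⬝ᵥ q.2.1 * (2 * (q.2.2 * (1 - q.2.2)))) := by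
    intro q
    simp only [dotProduct_add, dotProduct_smul, smul_eq_mul, hd]
    ring
  rw [show (fun q : (Fin p → ℝ) × (Fin p → ℝ) × ℝ =>
      (c - w ⬝ᵥ (q.2.2 • q.1 + (1 - q.2.2) • q.2.1) - b) ^ 2) = _ from funext hpt]
  -- integrability of the six pieces
  have I1 := mu_triple_integrable (integrable_const (d ^ 2) (μ := νa))
    (integrable_const (1:ℝ) (μ := νb)) (integrable_const (1:ℝ) (μ := μΛ))
  have I2 := mu_triple_integrable (mu_int_dot2 νa hia w) (integrable_const (1:ℝ) (μ := νb)) hl2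
  have h1ml2 : Integrable (fun l : ℝ => (1 - l) ^ 2) μΛ := by
    have e : (fun l : ℝ => (1 - l) ^ 2) = fun l => 1 - 2 * l + l ^ 2 := funext fun l => by ring
    rw [e]
    exact ((integrable_const (1:ℝ)).sub (hl1.const_mul 2)).add hl2
  have hll : Integrable (fun l : ℝ => 2 * (l * (1 - l))) μΛ := by
    have e : (fun l : ℝ => 2 * (l * (1 - l))) = fun l => 2 * l - 2 * l ^ 2 := funext fun l => by ring
    rw [e]
    exact (hl1.const_mul 2).sub (hl2.const_mul 2)
  have I3 := mu_triple_integrable (integrable_const (1:ℝ) (μ := νa)) (mu_int_dot2 νb hib w) h1ml2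
  have I4 := mu_triple_integrable (mu_int_dot νa hia w) (integrable_const (1:ℝ) (μ := νb)) (hl1.const_mul (-2*d))
  have h1ml : Integrable (fun l : ℝ => -2 * d * (1 - l)) μΛ := by
    have e : (fun l : ℝ => -2 * d * (1 - l)) = fun l => -2 * d * 1 - -2 * d * l := funext fun l => by ring
    rw [e]
    exact (integrable_const _).sub (hl1.const_mul _)
  have I5 := mu_triple_integrable (integrable_const (1:ℝ) (μ := νa)) (mu_int_dot νb hib w) h1ml
  have I6 := mu_triple_integrable (mu_int_dot νa hia w) (mu_int_dot νb hib w) hll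
  have J2 : Integrable (fun q : (Fin p → ℝ) × (Fin p → ℝ) × ℝ =>
      d ^ 2 * (1 * 1) + (w ⬝ᵥ q.1) ^ 2 * (1 * q.2.2 ^ 2)) (νa.prod (νb.prod μΛ)) := by
    exact I1.add I2
  have J3 : Integrable (fun q : (Fin p → ℝ) × (Fin p → ℝ) × ℝ =>
      d ^ 2 * (1 * 1) + (w ⬝ᵥ q.1) ^ 2 * (1 * q.2.2 ^ 2)
      + 1 * ((w ⬝ᵥ q.2.1) ^ 2 * (1 - q.2.2) ^ 2)) (νa.prod (νb.prod μΛ)) := by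
    exact J2.add I3
  have J4 : Integrable (fun q : (Fin p → ℝ) × (Fin p → ℝ) × ℝ =>
      d ^ 2 * (1 * 1) + (w ⬝ᵥ q.1) ^ 2 * (1 * q.2.2 ^ 2)
      + 1 * ((w ⬝ᵥ q.2.1) ^ 2 * (1 - q.2.2) ^ 2)
      + w ⬝ᵥ q.1 * (1 * (-2 * d * q.2.2))) (νa.prod (νb.prod μΛ)) := by
    exact J3.add I4
  have J5 : Integrable (fun q : (Fin p → ℝ) × (Fin p → ℝ) × ℝ =>
      d ^ 2 * (1 * 1) + (w ⬝ᵥ q.1) ^ 2 * (1 * q.2.2 ^ 2)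
      + 1 * ((w ⬝ᵥ q.2.1) ^ 2 * (1 - q.2.2) ^ 2)
      + w ⬝ᵥ q.1 * (1 * (-2 * d * q.2.2))
      + 1 * (w ⬝ᵥ q.2.1 * (-2 * d * (1 - q.2.2)))) (νa.prod (νb.prod μΛ)) := by
    exact J4.add I5
  rw [integral_add J5 I6, integral_add J4 I5, integral_add J3 I4,
      integral_add J2 I3, integral_add I1 I2]
  have E1 : (∫ q : (Fin p → ℝ) × (Fin p → ℝ) × ℝ, d ^ 2 * (1 * 1) ∂(νa.prod (νb.prod μΛ)))
      = (∫ _x : Fin p → ℝ, d ^ 2 ∂νa) * ((∫ _x : Fin p → ℝ, (1:ℝ) ∂νb) * (∫ _l : ℝ, (1:ℝ) ∂μΛ)) :=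
    mu_triple_integral (fun _ => d ^ 2) (fun _ => (1:ℝ)) (fun _ => (1:ℝ))
  have E2 : (∫ q : (Fin p → ℝ) × (Fin p → ℝ) × ℝ, (w ⬝ᵥ q.1) ^ 2 * (1 * q.2.2 ^ 2) ∂(νa.prod (νb.prod μΛ)))
      = (∫ x, (w ⬝ᵥ x) ^ 2 ∂νa) * ((∫ _x : Fin p → ℝ, (1:ℝ) ∂νb) * (∫ l : ℝ, l ^ 2 ∂μΛ)) :=
    mu_triple_integral (fun x => (w ⬝ᵥ x) ^ 2) (fun _ => (1:ℝ)) (fun l => l ^ 2)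
  have E3 : (∫ q : (Fin p → ℝ) × (Fin p → ℝ) × ℝ, 1 * ((w ⬝ᵥ q.2.1) ^ 2 * (1 - q.2.2) ^ 2) ∂(νa.prod (νb.prod μΛ)))
      = (∫ _x : Fin p → ℝ, (1:ℝ) ∂νa) * ((∫ x, (w ⬝ᵥ x) ^ 2 ∂νb) * (∫ l : ℝ, (1 - l) ^ 2 ∂μΛ)) :=
    mu_triple_integral (fun _ => (1:ℝ)) (fun x => (w ⬝ᵥ x) ^ 2) (fun l => (1 - l) ^ 2)
  have E4 : (∫ q : (Fin p → ℝ) × (Fin p → ℝ) × ℝ, w ⬝ᵥ q.1 * (1 * (-2 * d * q.2.2)) ∂(νa.prod (νb.prod μΛ)))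
      = (∫ x, w ⬝ᵥ x ∂νa) * ((∫ _x : Fin p → ℝ, (1:ℝ) ∂νb) * (∫ l : ℝ, -2 * d * l ∂μΛ)) :=
    mu_triple_integral (fun x => w ⬝ᵥ x) (fun _ => (1:ℝ)) (fun l => -2 * d * l)
  have E5 : (∫ q : (Fin p → ℝ) × (Fin p → ℝ) × ℝ, 1 * (w ⬝ᵥ q.2.1 * (-2 * d * (1 - q.2.2))) ∂(νa.prod (νb.prod μΛ)))
      = (∫ _x : Fin p → ℝ, (1:ℝ) ∂νa) * ((∫ x, w ⬝ᵥ x ∂νb) * (∫ l : ℝ, -2 * d * (1 - l) ∂μΛ)) :=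
    mu_triple_integral (fun _ => (1:ℝ)) (fun x => w ⬝ᵥ x) (fun l => -2 * d * (1 - l))
  have E6 : (∫ q : (Fin p → ℝ) × (Fin p → ℝ) × ℝ, w ⬝ᵥ q.1 * (w ⬝ᵥ q.2.1 * (2 * (q.2.2 * (1 - q.2.2)))) ∂(νa.prod (νb.prod μΛ)))
      = (∫ x, w ⬝ᵥ x ∂νa) * ((∫ x, w ⬝ᵥ x ∂νb) * (∫ l : ℝ, 2 * (l * (1 - l)) ∂μΛ)) :=
    mu_triple_integral (fun x => w ⬝ᵥ x) (fun x => w ⬝ᵥ x) (fun l => 2 * (l * (1 - l)))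
  rw [E1, E2, E3, E4, E5, E6]
  rw [mu_sec_dot νa hia μa S hma hca w, mu_sec_dot νb hib μb S hmb hcb w,
      mu_mean_dot νa hia μa hma w, mu_mean_dot νb hib μb hmb w]
  have e1 : ∫ l : ℝ, (1 - l) ^ 2 ∂μΛ = s := by
    have e : (fun l : ℝ => (1 - l) ^ 2) = fun l => 1 - 2 * l + l ^ 2 := funext fun l => by ring
    have k1 : Integrable (fun l : ℝ => 1 - 2 * l) μΛ := by
      exact (integrable_const _).sub (hl1.const_mul 2)
    rw [e, integral_add k1 hl2,
        integral_sub (integrable_const (1:ℝ)) (hl1.const_mul 2), integral_const_mul,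
        hΛmean, ← hs]
    simp only [integral_const, measure_univ, probReal_univ, ENNReal.toReal_one, smul_eq_mul, one_mul]
    ring
  have e2 : ∫ l : ℝ, -2 * d * l ∂μΛ = -d := by
    rw [integral_const_mul, hΛmean]; ring
  have e3 : ∫ l : ℝ, -2 * d * (1 - l) ∂μΛ = -d := by
    rw [integral_const_mul, integral_sub (integrable_const (1:ℝ)) hl1, hΛmean]
    simp only [integral_const, measure_univ, probReal_univ, ENNReal.toReal_one, smul_eq_mul, one_mul]
    ring
  have e4 : ∫ l : ℝ, 2 * (l * (1 - l)) ∂μΛ = 1 - 2 * s := by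
    have e : (fun l : ℝ => 2 * (l * (1 - l))) = fun l => 2 * l - 2 * l ^ 2 := funext fun l => by ring
    rw [e, integral_sub (hl1.const_mul 2) (hl2.const_mul 2), integral_const_mul,
        integral_const_mul, hΛmean, ← hs]
    ring
  rw [e1, e2, e3, e4, ← hs]
  simp only [integral_const, measure_univ, probReal_univ, ENNReal.toReal_one, smul_eq_mul, one_mul]
  ring


section MatAux
variable {p : ℕ}

lemma mu_vecMulVec_mulVec (u v x : Fin p → ℝ) :
    (vecMulVec u v) *ᵥ x = (v ⬝ᵥ x) • u := by
  funext i
  simp only [mulVec, dotProduct, vecMulVec_apply, Pi.smul_apply, smul_eq_mul, Finset.sum_mul,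
    Finset.mul_sum]
  exact Finset.sum_congr rfl fun j _ => by ring

lemma mu_Ssymm {S : Matrix (Fin p) (Fin p) ℝ} (hS : S.IsHermitian) (i j : Fin p) :
    S j i = S i j := by
  have := congrFun (congrFun hS.eq i) j
  simpa [conjTranspose_apply] using this

lemma mu_dot_S_symm {S : Matrix (Fin p) (Fin p) ℝ} (hS : S.IsHermitian) (x y : Fin p → ℝ) :
    x ⬝ᵥ (S *ᵥ y) = y ⬝ᵥ (S *ᵥ x) := by
  simp only [dotProduct, mulVec, Finset.mul_sum]
  rw [Finset.sum_comm]
  exact Finset.sum_congr rfl fun i _ => Finset.sum_congr rfl fun j _ => by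
    rw [mu_Ssymm hS j i]; ring

end MatAux

/-- Theorem 2, mixup part: intra-class domain mixup replaces each class-`y`
representation by `λx₁ + (1−λ)x₂` with `x₁ ~ ν^{(y,S)}`, `x₂ ~ ν^{(y,T)}` independent and
`λ ~ μ_Λ` supported in `[0,1]` with mean `1/2`; with `s = E[λ²]`, the mixup risk
`R_MU(w,b) = (1/2)∫(0 − ⟨w,x⟩ − b)² dρ₀ + (1/2)∫(1 − ⟨w,x⟩ − b)² dρ₁` has the unique
minimizer `w*_MU = (1/4)(2sΣ + (s − 1/4)Δ_CΔ_Cᵀ + (1/4)Δ_DΔ_Dᵀ)⁻¹Δ_D`,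
`b*_MU = 1/2 − (1/2)⟨w*_MU, μ^{(0,T)} + μ^{(1,S)}⟩`. -/
theorem mixup_optimal_model
    (p : ℕ) (μ0S μ0T μ1S μ1T : Fin p → ℝ)
    (hmean : μ1S - μ0S = μ1T - μ0T)
    (ΔD ΔC : Fin p → ℝ)
    (hΔD : ΔD = μ1S - μ0S) (hΔC : ΔC = μ0S - μ0T)
    (S : Matrix (Fin p) (Fin p) ℝ) (hS : S.PosDef)
    (ν0S ν0T ν1S ν1T : Measure (Fin p → ℝ))
    [IsProbabilityMeasure ν0S] [IsProbabilityMeasure ν0T]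
    [IsProbabilityMeasure ν1S] [IsProbabilityMeasure ν1T]
    (hint : ∀ ν ∈ [ν0S, ν0T, ν1S, ν1T], Integrable (fun x => ‖x‖ ^ 2) ν)
    (hmeans : (∀ i, (∫ x, x i ∂ν0S) = μ0S i) ∧ (∀ i, (∫ x, x i ∂ν0T) = μ0T i) ∧
              (∀ i, (∫ x, x i ∂ν1S) = μ1S i) ∧ (∀ i, (∫ x, x i ∂ν1T) = μ1T i))
    (hcovs : (∀ i j, (∫ x, (x i - μ0S i) * (x j - μ0S j) ∂ν0S) = S i j) ∧
             (∀ i j, (∫ x, (x i - μ0T i) * (x j - μ0T j) ∂ν0T) = S i j) ∧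
             (∀ i j, (∫ x, (x i - μ1S i) * (x j - μ1S j) ∂ν1S) = S i j) ∧
             (∀ i j, (∫ x, (x i - μ1T i) * (x j - μ1T j) ∂ν1T) = S i j))
    (μΛ : Measure ℝ) [IsProbabilityMeasure μΛ]
    (hsupp : ∀ᵐ l ∂μΛ, l ∈ Set.Icc (0 : ℝ) 1)
    (hΛmean : ∫ l, l ∂μΛ = 1/2)
    (s : ℝ) (hs : s = ∫ l, l ^ 2 ∂μΛ)
    (ρ0 ρ1 : Measure (Fin p → ℝ))
    (hρ0 : ρ0 = Measure.map
      (fun q : (Fin p → ℝ) × (Fin p → ℝ) × ℝ => q.2.2 • q.1 + (1 - q.2.2) • q.2.1)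
      (ν0S.prod (ν0T.prod μΛ)))
    (hρ1 : ρ1 = Measure.map
      (fun q : (Fin p → ℝ) × (Fin p → ℝ) × ℝ => q.2.2 • q.1 + (1 - q.2.2) • q.2.1)
      (ν1S.prod (ν1T.prod μΛ)))
    (R : (Fin p → ℝ) → ℝ → ℝ)
    (hR : ∀ w b, R w b = (1/2 : ℝ) * (∫ x, ((0 : ℝ) - w ⬝ᵥ x - b) ^ 2 ∂ρ0)
        + (1/2 : ℝ) * (∫ x, ((1 : ℝ) - w ⬝ᵥ x - b) ^ 2 ∂ρ1))
    (wstar : Fin p → ℝ)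
    (hwstar : wstar = (1/4 : ℝ) •
      (((2 * s) • S + (s - 1/4) • vecMulVec ΔC ΔC + (1/4 : ℝ) • vecMulVec ΔD ΔD)⁻¹ *ᵥ ΔD))
    (bstar : ℝ) (hbstar : bstar = 1/2 - (1/2 : ℝ) * (wstar ⬝ᵥ (μ0T + μ1S))) :
    (∀ w b, R wstar bstar ≤ R w b) ∧
    (∀ w b, R w b = R wstar bstar → w = wstar ∧ b = bstar) := by

  obtain ⟨hm0S, hm0T, hm1S, hm1T⟩ := hmeans
  obtain ⟨hc0S, hc0T, hc1S, hc1T⟩ := hcovs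
  have hi0S : Integrable (fun x => ‖x‖ ^ 2) ν0S := hint ν0S (by simp)
  have hi0T : Integrable (fun x => ‖x‖ ^ 2) ν0T := hint ν0T (by simp)
  have hi1S : Integrable (fun x => ‖x‖ ^ 2) ν1S := hint ν1S (by simp)
  have hi1T : Integrable (fun x => ‖x‖ ^ 2) ν1T := hint ν1T (by simp)
  have hl1 : Integrable (fun l : ℝ => l) μΛ := by simpa using mu_lambda_int hsupp 1
  have hl2 : Integrable (fun l : ℝ => l ^ 2) μΛ := mu_lambda_int hsupp 2
  -- variance nonnegativity: s ≥ 1/4 > 0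
  have hs4 : 1/4 ≤ s := by
    have h0 : 0 ≤ ∫ l, (l - 1/2) ^ 2 ∂μΛ := integral_nonneg fun l => sq_nonneg _
    have he : ∫ l, (l - 1/2) ^ 2 ∂μΛ = s - 1/4 := by
      have e : (fun l : ℝ => (l - 1/2) ^ 2) = fun l => (l ^ 2 - l) + 1/4 :=
        funext fun l => by ring
      have k1 : Integrable (fun l : ℝ => l ^ 2 - l) μΛ := by exact hl2.sub hl1
      rw [e, integral_add k1 (integrable_const _), integral_sub hl2 hl1, hΛmean, ← hs,
          integral_const]
      simp only [measure_univ, probReal_univ, ENNReal.toReal_one, smul_eq_mul, one_mul]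
      ring
    linarith [he ▸ h0]
  have hspos : 0 < s := by linarith
  -- mean decompositions
  have hμ0S : μ0S = μ0T + ΔC := by rw [hΔC]; funext i; simp
  have hμ1T : μ1T = μ0T + ΔD := by rw [hΔD, hmean]; funext i; simp
  have hμ1S : μ1S = μ0T + ΔC + ΔD := by
    rw [hΔD, hΔC]; funext i; simp [Pi.add_apply, Pi.sub_apply]; try ring
  have d0S : ∀ w : Fin p → ℝ, w ⬝ᵥ μ0S = w ⬝ᵥ μ0T + w ⬝ᵥ ΔC := fun w => by
    rw [hμ0S, dotProduct_add]
  have d1T : ∀ w : Fin p → ℝ, w ⬝ᵥ μ1T = w ⬝ᵥ μ0T + w ⬝ᵥ ΔD := fun w => by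
    rw [hμ1T, dotProduct_add]
  have d1S : ∀ w : Fin p → ℝ, w ⬝ᵥ μ1S = w ⬝ᵥ μ0T + w ⬝ᵥ ΔC + w ⬝ᵥ ΔD := fun w => by
    rw [hμ1S, dotProduct_add, dotProduct_add]
  -- closed form of the risk
  have hRex : ∀ w b, R w b =
      (2*s*(w ⬝ᵥ (S *ᵥ w)) + (s - 1/4)*(w ⬝ᵥ ΔC)^2 + (1/4)*(w ⬝ᵥ ΔD)^2 - (1/2)*(w ⬝ᵥ ΔD))
      + 1/4 + (b - 1/2 + (1/2)*(w ⬝ᵥ (μ0T + μ1S)))^2 := by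
    intro w b
    rw [hR w b, hρ0, hρ1,
        mu_key_integral p w μ0S μ0T S ν0S ν0T hi0S hi0T hm0S hm0T hc0S hc0T μΛ hsupp hΛmean
          s hs 0 b,
        mu_key_integral p w μ1S μ1T S ν1S ν1T hi1S hi1T hm1S hm1T hc1S hc1T μΛ hsupp hΛmean
          s hs 1 b,
        dotProduct_add, d0S w, d1T w, d1S w]
    ring
  -- the matrix A and its properties
  set A : Matrix (Fin p) (Fin p) ℝ :=
    (2 * s) • S + (s - 1/4) • vecMulVec ΔC ΔC + (1/4 : ℝ) • vecMulVec ΔD ΔD with hA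
  have hquad : ∀ x y : Fin p → ℝ, x ⬝ᵥ (A *ᵥ y) =
      2*s*(x ⬝ᵥ (S *ᵥ y)) + (s - 1/4)*((ΔC ⬝ᵥ y)*(x ⬝ᵥ ΔC)) + (1/4)*((ΔD ⬝ᵥ y)*(x ⬝ᵥ ΔD)) := by
    intro x y
    rw [hA]
    simp only [add_mulVec, smul_mulVec, mu_vecMulVec_mulVec, dotProduct_add,
      dotProduct_smul, smul_eq_mul]
    try ring
  have hsymm : ∀ x y : Fin p → ℝ, x ⬝ᵥ (A *ᵥ y) = y ⬝ᵥ (A *ᵥ x) := by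
    intro x y
    rw [hquad x y, hquad y x, mu_dot_S_symm hS.1 x y,
        show x ⬝ᵥ ΔC = ΔC ⬝ᵥ x from dotProduct_comm x ΔC,
        show y ⬝ᵥ ΔC = ΔC ⬝ᵥ y from dotProduct_comm y ΔC,
        show x ⬝ᵥ ΔD = ΔD ⬝ᵥ x from dotProduct_comm x ΔD,
        show y ⬝ᵥ ΔD = ΔD ⬝ᵥ y from dotProduct_comm y ΔD]
    ring
  have hApd : A.PosDef := by
    refine Matrix.PosDef.of_dotProduct_mulVec_pos ?_ ?_
    · show Aᴴ = A
      ext i j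
      simp only [hA, conjTranspose_apply, Matrix.add_apply, Matrix.smul_apply,
        vecMulVec_apply, smul_eq_mul, star_trivial]
      rw [mu_Ssymm hS.1 i j]
      ring
    · intro x hx
      have h1 : 0 < x ⬝ᵥ (S *ᵥ x) := by simpa using hS.dotProduct_mulVec_pos hx
      have hstar : star x = x := by
        funext i; simp
      rw [hstar, hquad x x, dotProduct_comm x ΔC, dotProduct_comm x ΔD]
      nlinarith [mul_pos hspos h1, mul_self_nonneg (x ⬝ᵥ ΔC), mul_self_nonneg (x ⬝ᵥ ΔD),
        mul_nonneg (show (0:ℝ) ≤ s - 1/4 by linarith) (mul_self_nonneg (x ⬝ᵥ ΔC))]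
  have hAun : IsUnit A.det := hApd.det_pos.ne'.isUnit
  have hAw : A *ᵥ wstar = (1/4 : ℝ) • ΔD := by
    rw [hwstar, mulVec_smul, mulVec_mulVec, Matrix.mul_nonsing_inv A hAun, one_mulVec]
  have hcstar : bstar - 1/2 + (1/2)*(wstar ⬝ᵥ (μ0T + μ1S)) = 0 := by rw [hbstar]; ring
  have hGw : ∀ v : Fin p → ℝ,
      2*s*(v ⬝ᵥ (S *ᵥ v)) + (s - 1/4)*(v ⬝ᵥ ΔC)^2 + (1/4)*(v ⬝ᵥ ΔD)^2 = v ⬝ᵥ (A *ᵥ v) := by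
    intro v
    rw [hquad v v, dotProduct_comm v ΔC, dotProduct_comm v ΔD]
    ring
  have hGkey : ∀ w : Fin p → ℝ,
      (2*s*(w ⬝ᵥ (S *ᵥ w)) + (s - 1/4)*(w ⬝ᵥ ΔC)^2 + (1/4)*(w ⬝ᵥ ΔD)^2 - (1/2)*(w ⬝ᵥ ΔD))
      - (2*s*(wstar ⬝ᵥ (S *ᵥ wstar)) + (s - 1/4)*(wstar ⬝ᵥ ΔC)^2 + (1/4)*(wstar ⬝ᵥ ΔD)^2
          - (1/2)*(wstar ⬝ᵥ ΔD))
      = (w - wstar) ⬝ᵥ (A *ᵥ (w - wstar)) := by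
    intro w
    have hwD : w ⬝ᵥ ΔD = 4 * (w ⬝ᵥ (A *ᵥ wstar)) := by
      rw [show A *ᵥ wstar = (1/4 : ℝ) • ΔD from hAw, dotProduct_smul, smul_eq_mul]; ring
    have hwsD : wstar ⬝ᵥ ΔD = 4 * (wstar ⬝ᵥ (A *ᵥ wstar)) := by
      rw [show A *ᵥ wstar = (1/4 : ℝ) • ΔD from hAw, dotProduct_smul, smul_eq_mul]; ring
    have expand : (w - wstar) ⬝ᵥ (A *ᵥ (w - wstar)) =
        w ⬝ᵥ (A *ᵥ w) - 2*(w ⬝ᵥ (A *ᵥ wstar)) + wstar ⬝ᵥ (A *ᵥ wstar) := by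
      rw [mulVec_sub, dotProduct_sub, sub_dotProduct, sub_dotProduct, hsymm wstar w]
      ring
    rw [hGw w, hGw wstar, hwD, hwsD, expand]
    ring
  have hpos : ∀ v : Fin p → ℝ, 0 ≤ v ⬝ᵥ (A *ᵥ v) := by
    intro v
    by_cases h : v = 0
    · simp [h]
    · have := hApd.dotProduct_mulVec_pos h
      have hstar : star v = v := by funext i; simp
      rw [hstar] at this
      linarith
  have hposne : ∀ v : Fin p → ℝ, v ≠ 0 → 0 < v ⬝ᵥ (A *ᵥ v) := by
    intro v hv
    have := hApd.dotProduct_mulVec_pos hv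
    have hstar : star v = v := by funext i; simp
    rwa [hstar] at this
  constructor
  · intro w b
    rw [hRex w b, hRex wstar bstar, hcstar]
    have h1 := hGkey w
    have h2 := hpos (w - wstar)
    have hz : ((0:ℝ))^2 = 0 := by norm_num
    rw [hz]
    nlinarith [sq_nonneg (b - 1/2 + (1/2)*(w ⬝ᵥ (μ0T + μ1S)))]
  · intro w b heq
    rw [hRex w b, hRex wstar bstar, hcstar] at heq
    have h1 := hGkey w
    have h2 := hpos (w - wstar)
    have hz : ((0:ℝ))^2 = 0 := by norm_num
    rw [hz] at heq
    have hcsq : 0 ≤ (b - 1/2 + (1/2)*(w ⬝ᵥ (μ0T + μ1S)))^2 := sq_nonneg _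
    have hQ0 : (w - wstar) ⬝ᵥ (A *ᵥ (w - wstar)) = 0 := by linarith
    have hw : w = wstar := by
      by_contra hne
      have := hposne (w - wstar) (sub_ne_zero.2 hne)
      linarith
    refine ⟨hw, ?_⟩
    have hc0 : (b - 1/2 + (1/2)*(w ⬝ᵥ (μ0T + μ1S)))^2 = 0 := by linarith
    have hc0' : b - 1/2 + (1/2)*(w ⬝ᵥ (μ0T + μ1S)) = 0 := by
      exact pow_eq_zero_iff (n := 2) (by norm_num) |>.mp hc0
    rw [hbstar, ← hw]
    linarith
end

section
/- Let Σ ∈ ℝ^{p×p} be symmetric positive definite and Δ_C, Δ_D ∈ ℝ^p with Δ_Cᵀ Σ⁻¹ Δ_D = 0. Then for any α > 0 and t ≥ 0, there exists γ > 0 such that (α·Σ + t·Δ_C Δ_Cᵀ + (1/4)·Δ_D Δ_Dᵀ)⁻¹ Δ_D = γ · Σ⁻¹ Δ_D. -/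
open Matrix

lemma vecMulVec_mulVec' {p : ℕ} (w v x : Fin p → ℝ) :
    vecMulVec w v *ᵥ x = (v ⬝ᵥ x) • w := by
  ext i
  simp [vecMulVec_apply, mulVec, dotProduct, Finset.mul_sum, mul_comm, mul_assoc, mul_left_comm]

lemma smul_vecMulVec_posSemidef {p : ℕ} (c : ℝ) (hc : 0 ≤ c) (v : Fin p → ℝ) :
    (c • vecMulVec v v).PosSemidef := by
  rw [posSemidef_iff_dotProduct_mulVec]
  constructor
  · ext i j
    simp [vecMulVec_apply, mul_comm]
  · intro x
    rw [star_trivial, Matrix.smul_mulVec, vecMulVec_mulVec', dotProduct_smul,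
      dotProduct_smul, smul_eq_mul, smul_eq_mul, dotProduct_comm x v]
    exact mul_nonneg hc (mul_self_nonneg _)

/-- under the orthogonality assumption `Δ_Cᵀ Σ⁻¹ Δ_D = 0` (Assumption 4), for any
`α > 0` and `t ≥ 0` the vector `(α·Σ + t·Δ_CΔ_Cᵀ + (1/4)·Δ_DΔ_Dᵀ)⁻¹ Δ_D` is a positive multiple
of `Σ⁻¹ Δ_D`. -/
theorem inv_perturbed_apply_proportional
    (p : ℕ) (S : Matrix (Fin p) (Fin p) ℝ) (hS : S.PosDef)
    (ΔC ΔD : Fin p → ℝ)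
    (horth : ΔC ⬝ᵥ (S⁻¹ *ᵥ ΔD) = 0)
    (α t : ℝ) (hα : 0 < α) (ht : 0 ≤ t) :
    ∃ γ : ℝ, 0 < γ ∧
      (α • S + t • vecMulVec ΔC ΔC + (1/4 : ℝ) • vecMulVec ΔD ΔD)⁻¹ *ᵥ ΔD
        = γ • (S⁻¹ *ᵥ ΔD) := by
  set M := α • S + t • vecMulVec ΔC ΔC + (1/4 : ℝ) • vecMulVec ΔD ΔD with hM
  set d : ℝ := ΔD ⬝ᵥ (S⁻¹ *ᵥ ΔD) with hd
  have hSinv : S⁻¹.PosDef := hS.inv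
  have hd0 : 0 ≤ d := by
    have := hSinv.posSemidef.dotProduct_mulVec_nonneg ΔD
    simpa [hd] using this
  have hαS : (α • S).PosDef := by
    refine posDef_iff_dotProduct_mulVec.mpr ⟨?_, fun x hx => ?_⟩
    · show (α • S)ᴴ = α • S
      rw [conjTranspose_smul, hS.isHermitian.eq, star_trivial]
    · rw [Matrix.smul_mulVec, dotProduct_smul, smul_eq_mul]
      exact mul_pos hα (hS.dotProduct_mulVec_pos hx)
  have hMpd : M.PosDef := by
    have h1 := (hαS.add_posSemidef (smul_vecMulVec_posSemidef t ht ΔC))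
    have h2 := h1.add_posSemidef (smul_vecMulVec_posSemidef (1/4 : ℝ) (by norm_num) ΔD)
    exact h2
  have hγpos : 0 < α + (1/4) * d := by positivity
  set γ : ℝ := (α + (1/4) * d)⁻¹ with hγ
  refine ⟨γ, inv_pos.mpr hγpos, ?_⟩
  -- M *ᵥ (γ • (S⁻¹ *ᵥ ΔD)) = ΔD
  have hSS : S *ᵥ (S⁻¹ *ᵥ ΔD) = ΔD := by
    rw [mulVec_mulVec, Matrix.mul_nonsing_inv _ (isUnit_iff_isUnit_det _ |>.1 hS.isUnit),
      one_mulVec]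
  have key : M *ᵥ (γ • (S⁻¹ *ᵥ ΔD)) = ΔD := by
    rw [mulVec_smul, hM]
    rw [add_mulVec, add_mulVec, Matrix.smul_mulVec, Matrix.smul_mulVec,
      Matrix.smul_mulVec, vecMulVec_mulVec', vecMulVec_mulVec', hSS, horth, ← hd]
    simp only [zero_smul, smul_zero, add_zero]
    rw [smul_add, smul_smul, smul_smul, smul_smul, ← add_smul]
    have h1 : γ * α + γ * (1 / 4) * d = 1 := by
      rw [hγ]
      field_simp
    rw [h1, one_smul]
  have := hMpd.isUnit
  letI := this.invertible
  calc M⁻¹ *ᵥ ΔD = M⁻¹ *ᵥ (M *ᵥ (γ • (S⁻¹ *ᵥ ΔD))) := by rw [key]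
    _ = γ • (S⁻¹ *ᵥ ΔD) := by
        rw [mulVec_mulVec, Matrix.inv_mul_of_invertible, one_mulVec]
end

section
/- Let Σ ∈ ℝ^{p×p} be symmetric positive definite, Δ_C, Δ_D ∈ ℝ^p, and 0 < π₀ ≤ 1/4. Set β := 2π₀(1 − 2π₀), Δ̄ := Δ_D − (1 − 4π₀)Δ_C, A := Σ + βΔ_CΔ_Cᵀ, and c_{π₀} := (1 − 4π₀ + β·Δ_CᵀΣ⁻¹Δ_D)/(1 + β·Δ_CᵀΣ⁻¹Δ_C). Then (1/4)(Σ + βΔ_CΔ_Cᵀ + (1/4)Δ̄Δ̄ᵀ)⁻¹ Δ̄ = γ_SRM · (Σ⁻¹Δ_D − c_{π₀}·Σ⁻¹Δ_C), where γ_SRM := 1/(4 + Δ̄ᵀA⁻¹Δ̄) > 0. -/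
open Matrix

private lemma vmv_mulVec {p : ℕ} (v w x : Fin p → ℝ) :
    vecMulVec v w *ᵥ x = (w ⬝ᵥ x) • v := by
  ext i
  simp [vecMulVec_apply, mulVec, dotProduct, Finset.mul_sum, mul_comm, mul_left_comm]

private lemma psd_smul_vmv {p : ℕ} (v : Fin p → ℝ) {c : ℝ} (hc : 0 ≤ c) :
    (c • vecMulVec v v).PosSemidef := by
  rw [posSemidef_iff_dotProduct_mulVec]
  constructor
  · ext i j
    simp [vecMulVec_apply, mul_comm, conjTranspose_apply]
  · intro x
    rw [smul_mulVec, vmv_mulVec]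
    simp only [star_trivial, dotProduct_smul, smul_eq_mul, dotProduct_smul]
    exact mul_nonneg hc (by rw [dotProduct_comm x v]; exact mul_self_nonneg _)

private lemma quad_nonneg {p : ℕ} {M : Matrix (Fin p) (Fin p) ℝ} (hM : M.PosSemidef)
    (x : Fin p → ℝ) : 0 ≤ x ⬝ᵥ (M *ᵥ x) := by
  simpa using hM.dotProduct_mulVec_nonneg x

/-- decomposition of the optimal SRM weight vector. With `β := 2π₀(1 − 2π₀)`,
`Δ̄ := Δ_D − (1 − 4π₀)Δ_C`, `A := Σ + βΔ_CΔ_Cᵀ` and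
`c_{π₀} := (1 − 4π₀ + βΔ_CᵀΣ⁻¹Δ_D)/(1 + βΔ_CᵀΣ⁻¹Δ_C)`,
`(1/4)(Σ + βΔ_CΔ_Cᵀ + (1/4)Δ̄Δ̄ᵀ)⁻¹Δ̄ = γ_SRM (Σ⁻¹Δ_D − c_{π₀}Σ⁻¹Δ_C)` where
`γ_SRM := 1/(4 + Δ̄ᵀA⁻¹Δ̄) > 0`. -/
theorem srm_weight_decomposition
    (p : ℕ) (S : Matrix (Fin p) (Fin p) ℝ) (hS : S.PosDef)
    (ΔC ΔD : Fin p → ℝ)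
    (π₀ : ℝ) (hπ₀pos : 0 < π₀) (hπ₀le : π₀ ≤ 1/4)
    (β : ℝ) (hβ : β = 2 * π₀ * (1 - 2 * π₀))
    (Δbar : Fin p → ℝ) (hΔbar : Δbar = ΔD - (1 - 4 * π₀) • ΔC)
    (A : Matrix (Fin p) (Fin p) ℝ) (hA : A = S + β • vecMulVec ΔC ΔC)
    (cπ : ℝ)
    (hcπ : cπ = (1 - 4 * π₀ + β * (ΔC ⬝ᵥ (S⁻¹ *ᵥ ΔD))) / (1 + β * (ΔC ⬝ᵥ (S⁻¹ *ᵥ ΔC))))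
    (γSRM : ℝ) (hγ : γSRM = 1 / (4 + Δbar ⬝ᵥ (A⁻¹ *ᵥ Δbar))) :
    (1/4 : ℝ) • ((S + β • vecMulVec ΔC ΔC + (1/4 : ℝ) • vecMulVec Δbar Δbar)⁻¹ *ᵥ Δbar)
        = γSRM • (S⁻¹ *ᵥ ΔD - cπ • (S⁻¹ *ᵥ ΔC)) ∧
      0 < γSRM := by
  have hβ0 : (0:ℝ) ≤ β := by nlinarith
  -- positive definiteness of A and M
  have hApd : A.PosDef := by
    rw [hA]; exact hS.add_posSemidef (psd_smul_vmv ΔC hβ0)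
  have hMpd : (S + β • vecMulVec ΔC ΔC + (1/4 : ℝ) • vecMulVec Δbar Δbar).PosDef := by
    rw [← hA]; exact hApd.add_posSemidef (psd_smul_vmv Δbar (by norm_num))
  have hSdet : IsUnit S.det := hS.det_pos.ne'.isUnit
  have hAdet : IsUnit A.det := hApd.det_pos.ne'.isUnit
  have hMdet : IsUnit (S + β • vecMulVec ΔC ΔC + (1/4 : ℝ) • vecMulVec Δbar Δbar).det :=
    hMpd.det_pos.ne'.isUnit
  -- notation
  set s : ℝ := ΔC ⬝ᵥ (S⁻¹ *ᵥ ΔC) with hs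
  set t : ℝ := ΔC ⬝ᵥ (S⁻¹ *ᵥ ΔD) with ht
  have hs0 : 0 ≤ s := quad_nonneg hS.inv.posSemidef ΔC
  have hd0 : (0:ℝ) < 1 + β * s := by positivity
  set z : Fin p → ℝ := (S⁻¹ *ᵥ ΔD) - cπ • (S⁻¹ *ᵥ ΔC) with hz
  -- A *ᵥ z = Δbar
  have hSz : S *ᵥ z = ΔD - cπ • ΔC := by
    rw [hz, mulVec_sub, mulVec_smul, mulVec_mulVec, mulVec_mulVec,
      Matrix.mul_nonsing_inv S hSdet, one_mulVec, one_mulVec]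
  have hCz : ΔC ⬝ᵥ z = t - cπ * s := by
    rw [hz, dotProduct_sub, dotProduct_smul, smul_eq_mul]
  have hcoef : -cπ + β * (t - cπ * s) = -(1 - 4 * π₀) := by
    rw [hcπ]; field_simp; ring
  have hAz : A *ᵥ z = Δbar := by
    rw [hA, add_mulVec, smul_mulVec, vmv_mulVec, hSz, hCz, hΔbar]
    ext i
    simp only [Pi.add_apply, Pi.sub_apply, Pi.smul_apply, smul_eq_mul]
    linear_combination ΔC i * hcoef
  have hAinv : A⁻¹ *ᵥ Δbar = z := by
    rw [← hAz, mulVec_mulVec, Matrix.nonsing_inv_mul A hAdet, one_mulVec]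
  set r : ℝ := Δbar ⬝ᵥ (A⁻¹ *ᵥ Δbar) with hr
  have hr0 : 0 ≤ r := quad_nonneg hApd.inv.posSemidef Δbar
  have h4r : (0:ℝ) < 4 + r := by positivity
  have hγpos : 0 < γSRM := by rw [hγ]; exact one_div_pos.mpr h4r
  refine ⟨?_, hγpos⟩
  have hrz : Δbar ⬝ᵥ z = r := by rw [hr, hAinv]
  -- M *ᵥ z = ((4+r)/4) • Δbar
  have hMz : (S + β • vecMulVec ΔC ΔC + (1/4 : ℝ) • vecMulVec Δbar Δbar) *ᵥ z
      = ((4 + r)/4) • Δbar := by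
    rw [add_mulVec, ← hA, hAz, smul_mulVec, vmv_mulVec, hrz]
    ext i
    simp only [Pi.add_apply, Pi.smul_apply, smul_eq_mul]
    ring
  have hMinv : (S + β • vecMulVec ΔC ΔC + (1/4 : ℝ) • vecMulVec Δbar Δbar)⁻¹ *ᵥ Δbar
      = (4/(4+r)) • z := by
    have := congrArg (fun v => (S + β • vecMulVec ΔC ΔC + (1/4 : ℝ) • vecMulVec Δbar Δbar)⁻¹ *ᵥ v) hMz
    simp only [mulVec_mulVec, Matrix.nonsing_inv_mul _ hMdet, one_mulVec, mulVec_smul] at this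
    rw [this, smul_smul]
    have h1 : (4/(4+r)) * ((4+r)/4) = 1 := by field_simp
    rw [h1, one_smul]
  rw [hMinv, smul_smul, hγ]
  congr 1
  field_simp
end

section
/- Let Σ ∈ ℝ^{p×p} be symmetric positive definite, Δ_C, Δ_D ∈ ℝ^p with Δ_D ≠ 0 and Δ_CᵀΣ⁻¹Δ_D = 0, let c ∈ ℝ, γ > 0, and set w := γ(Σ⁻¹Δ_D − c·Σ⁻¹Δ_C), a := √(Δ_DᵀΣ⁻¹Δ_D), b := √(Δ_CᵀΣ⁻¹Δ_C). Then wᵀΣw = γ²(a² + c²b²) > 0, and the two error arguments satisfy −(1/2)⟨w, Δ_C + Δ_D⟩/√(wᵀΣw) = (−a² + c·b²)/(2√(a² + c²b²)) and (1/2)⟨w, Δ_C − Δ_D⟩/√(wᵀΣw) = (−a² − c·b²)/(2√(a² + c²b²)). In particular, if c ≥ 0 then the first quantity is greater than or equal to the second. -/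
open Matrix

/-- closed form of the error arguments for a weight vector of the form
`w = γ(Σ⁻¹Δ_D − c·Σ⁻¹Δ_C)` under the orthogonality assumption `Δ_CᵀΣ⁻¹Δ_D = 0`, in terms
of `a = ‖Δ_D‖_{Σ⁻¹}` and `b = ‖Δ_C‖_{Σ⁻¹}`; if `c ≥ 0` the minority argument dominates. -/
theorem srm_error_arguments
    (p : ℕ) (S : Matrix (Fin p) (Fin p) ℝ) (hS : S.PosDef)
    (ΔC ΔD : Fin p → ℝ) (hΔD : ΔD ≠ 0)
    (horth : ΔC ⬝ᵥ (S⁻¹ *ᵥ ΔD) = 0)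
    (c γ : ℝ) (hγ : 0 < γ)
    (w : Fin p → ℝ) (hw : w = γ • (S⁻¹ *ᵥ ΔD - c • (S⁻¹ *ᵥ ΔC)))
    (a b : ℝ)
    (ha : a = Real.sqrt (ΔD ⬝ᵥ (S⁻¹ *ᵥ ΔD)))
    (hb : b = Real.sqrt (ΔC ⬝ᵥ (S⁻¹ *ᵥ ΔC))) :
    w ⬝ᵥ (S *ᵥ w) = γ ^ 2 * (a ^ 2 + c ^ 2 * b ^ 2) ∧
    0 < w ⬝ᵥ (S *ᵥ w) ∧
    -(1/2 : ℝ) * (w ⬝ᵥ (ΔC + ΔD)) / Real.sqrt (w ⬝ᵥ (S *ᵥ w))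
      = (-a ^ 2 + c * b ^ 2) / (2 * Real.sqrt (a ^ 2 + c ^ 2 * b ^ 2)) ∧
    (1/2 : ℝ) * (w ⬝ᵥ (ΔC - ΔD)) / Real.sqrt (w ⬝ᵥ (S *ᵥ w))
      = (-a ^ 2 - c * b ^ 2) / (2 * Real.sqrt (a ^ 2 + c ^ 2 * b ^ 2)) ∧
    (0 ≤ c →
      (-a ^ 2 - c * b ^ 2) / (2 * Real.sqrt (a ^ 2 + c ^ 2 * b ^ 2))
        ≤ (-a ^ 2 + c * b ^ 2) / (2 * Real.sqrt (a ^ 2 + c ^ 2 * b ^ 2))) := by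
  have hSi : (S⁻¹).PosDef := hS.inv
  have hsym : (S⁻¹)ᵀ = S⁻¹ := hSi.1
  have symm : ∀ x y : Fin p → ℝ, x ⬝ᵥ (S⁻¹ *ᵥ y) = y ⬝ᵥ (S⁻¹ *ᵥ x) := by
    intro x y
    rw [dotProduct_mulVec, ← mulVec_transpose, hsym, dotProduct_comm]
  have hinv : ∀ x : Fin p → ℝ, S *ᵥ (S⁻¹ *ᵥ x) = x := by
    intro x
    rw [mulVec_mulVec, mul_nonsing_inv _ (isUnit_iff_ne_zero.mpr hS.det_pos.ne'), one_mulVec]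
  have horth' : ΔD ⬝ᵥ (S⁻¹ *ᵥ ΔC) = 0 := by rw [symm]; exact horth
  have haa : a ^ 2 = ΔD ⬝ᵥ (S⁻¹ *ᵥ ΔD) := by
    rw [ha, Real.sq_sqrt (by simpa using hSi.posSemidef.dotProduct_mulVec_nonneg ΔD)]
  have hbb : b ^ 2 = ΔC ⬝ᵥ (S⁻¹ *ᵥ ΔC) := by
    rw [hb, Real.sq_sqrt (by simpa using hSi.posSemidef.dotProduct_mulVec_nonneg ΔC)]
  have hDD : (S⁻¹ *ᵥ ΔD) ⬝ᵥ ΔD = a ^ 2 := by rw [dotProduct_comm]; exact haa.symm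
  have hCC : (S⁻¹ *ᵥ ΔC) ⬝ᵥ ΔC = b ^ 2 := by rw [dotProduct_comm]; exact hbb.symm
  have hDC : (S⁻¹ *ᵥ ΔD) ⬝ᵥ ΔC = 0 := by rw [dotProduct_comm]; exact horth
  have hCD : (S⁻¹ *ᵥ ΔC) ⬝ᵥ ΔD = 0 := by rw [dotProduct_comm]; exact horth'
  have hapos : 0 < a ^ 2 := by
    rw [haa]; simpa using hSi.dotProduct_mulVec_pos hΔD
  have hbnn : 0 ≤ b ^ 2 := sq_nonneg b
  have hq : w ⬝ᵥ (S *ᵥ w) = γ ^ 2 * (a ^ 2 + c ^ 2 * b ^ 2) := by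
    subst hw
    simp only [mulVec_smul, mulVec_sub, hinv, smul_dotProduct, dotProduct_smul,
      sub_dotProduct, dotProduct_sub, smul_eq_mul, hDD, hCC, hDC, hCD]
    ring
  have hqpos : 0 < a ^ 2 + c ^ 2 * b ^ 2 := by positivity
  have hwpos : 0 < w ⬝ᵥ (S *ᵥ w) := by rw [hq]; positivity
  have hsqrt : Real.sqrt (w ⬝ᵥ (S *ᵥ w)) = γ * Real.sqrt (a ^ 2 + c ^ 2 * b ^ 2) := by
    rw [hq, Real.sqrt_mul (by positivity), Real.sqrt_sq hγ.le]
  have hspos : 0 < Real.sqrt (a ^ 2 + c ^ 2 * b ^ 2) := Real.sqrt_pos.mpr hqpos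
  have h1 : w ⬝ᵥ (ΔC + ΔD) = γ * (a ^ 2 - c * b ^ 2) := by
    subst hw
    simp only [smul_dotProduct, sub_dotProduct, dotProduct_add, smul_eq_mul,
      hDD, hCC, hDC, hCD]
    ring
  have h2 : w ⬝ᵥ (ΔC - ΔD) = γ * (-a ^ 2 - c * b ^ 2) := by
    subst hw
    simp only [smul_dotProduct, sub_dotProduct, dotProduct_sub, smul_eq_mul,
      hDD, hCC, hDC, hCD]
    ring
  refine ⟨hq, hwpos, ?_, ?_, ?_⟩
  · rw [h1, hsqrt]; field_simp; ring
  · rw [h2, hsqrt]; field_simp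
  · intro hc
    apply div_le_div_of_nonneg_right ?_ (by positivity)
    nlinarith [mul_nonneg hc hbnn]
end

section
/- Fix p ∈ ℕ, group means μ^{(y,d)} ∈ ℝ^p for (y,d) ∈ {0,1} × {S,T} satisfying μ^{(1,S)} − μ^{(0,S)} = μ^{(1,T)} − μ^{(0,T)}, with Δ_D := μ^{(1,S)} − μ^{(0,S)} ≠ 0 and Δ_C := μ^{(0,S)} − μ^{(0,T)}. Let Σ ∈ ℝ^{p×p} be symmetric positive definite with Δ_CᵀΣ⁻¹Δ_D = 0, let γ > 0, and set w := γ·Σ⁻¹Δ_D and b := 1/2 − (1/2)⟨w, μ^{(0,T)} + μ^{(1,S)}⟩. Then all four per-group Gaussian errors are equal: E^{(y,d)}(w,b) = Φ(−√(Δ_DᵀΣ⁻¹Δ_D)/2) for every (y,d) ∈ {0,1} × {S,T}, and hence WGE(w,b) = Φ(−√(Δ_DᵀΣ⁻¹Δ_D)/2). -/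
open MeasureTheory ProbabilityTheory Matrix

lemma aux_toNNReal_sq (σ : ℝ) :
    (NNReal.mk (σ^2) (sq_nonneg σ)) * 1 = (σ^2).toNNReal := by
  apply NNReal.coe_injective
  simp [Real.coe_toNNReal _ (sq_nonneg σ)]

set_option maxHeartbeats 1000000 in
lemma aux_map_affine (m σ : ℝ) :
    gaussianReal m (σ^2).toNNReal = (gaussianReal 0 1).map (fun z => σ * z + m) := by
  have h2 : ((gaussianReal 0 1).map (σ * ·)).map (· + m)
      = gaussianReal m ((NNReal.mk (σ^2) (sq_nonneg σ)) * 1) := by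
    rw [gaussianReal_map_const_mul σ, gaussianReal_map_add_const m, mul_zero, zero_add]
  rw [Measure.map_map (by fun_prop) (by fun_prop), aux_toNNReal_sq] at h2
  rw [← h2]
  rfl

lemma aux_singleton_zero (a : ℝ) : gaussianReal 0 1 {a} = 0 :=
  gaussianReal_absolutelyContinuous 0 one_ne_zero (measure_singleton a)

lemma aux_lt_eq_le (a : ℝ) :
    gaussianReal 0 1 {z | z < a} = gaussianReal 0 1 {z | z ≤ a} := by
  refine le_antisymm (measure_mono (Set.setOf_subset_setOf.mpr fun _ => le_of_lt)) ?_
  have hsub : {z : ℝ | z ≤ a} ⊆ {z | z < a} ∪ {a} := by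
    intro z hz
    have hz' : z ≤ a := hz
    rcases lt_or_eq_of_le hz' with h | h
    · exact Or.inl h
    · exact Or.inr h
  calc gaussianReal 0 1 {z | z ≤ a}
      ≤ gaussianReal 0 1 ({z | z < a} ∪ {a}) := measure_mono hsub
    _ ≤ gaussianReal 0 1 {z | z < a} + gaussianReal 0 1 {a} := measure_union_le _ _
    _ = gaussianReal 0 1 {z | z < a} := by rw [aux_singleton_zero, add_zero]

lemma aux_std_le (m t σ : ℝ) (hσ : 0 < σ) :
    gaussianReal m (σ^2).toNNReal {z | z ≤ t} = gaussianReal 0 1 {z | z ≤ (t - m)/σ} := by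
  rw [aux_map_affine m σ, Measure.map_apply (by fun_prop) (show MeasurableSet {z : ℝ | z ≤ t} from measurableSet_Iic)]
  congr 1
  ext z
  simp only [Set.mem_preimage, Set.mem_setOf_eq]
  rw [le_div_iff₀ hσ]
  constructor <;> intro h <;> nlinarith [mul_comm σ z]

lemma aux_std_gt (m t σ : ℝ) (hσ : 0 < σ) :
    gaussianReal m (σ^2).toNNReal {z | t < z} = gaussianReal 0 1 {z | z ≤ (m - t)/σ} := by
  have hneg : ((-σ)^2 : ℝ) = σ^2 := by ring
  rw [← hneg, aux_map_affine m (-σ),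
    Measure.map_apply (by fun_prop) (by exact measurableSet_Ioi)]
  have hpre : (fun z => -σ * z + m) ⁻¹' {z | t < z} = {z : ℝ | z < (m - t)/σ} := by
    ext z
    simp only [Set.mem_preimage, Set.mem_setOf_eq]
    rw [lt_div_iff₀ hσ]
    constructor <;> intro h <;> nlinarith [mul_comm σ z]
  rw [hpre, aux_lt_eq_le]

/-- for `w = γ·Σ⁻¹Δ_D` (γ > 0) with the midpoint intercept, under the
mean-structure and orthogonality (`Δ_CᵀΣ⁻¹Δ_D = 0`) assumptions, all four per-group Gaussian
errors equal `Φ(−√(Δ_DᵀΣ⁻¹Δ_D)/2)`, and hence so does the worst-group error. This is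
`WGE(f_{θ*_DS}) = WGE(f_{θ*_UW}) = WGE(f_{θ*_MU}) = Φ(−‖Δ_D‖_{Σ⁻¹}/2)` of Theorem 2. -/
theorem wge_of_scaled_sigma_inv_deltaD
    (p : ℕ) (μ0S μ0T μ1S μ1T : Fin p → ℝ)
    (hmean : μ1S - μ0S = μ1T - μ0T)
    (ΔD ΔC : Fin p → ℝ)
    (hΔD : ΔD = μ1S - μ0S) (hΔC : ΔC = μ0S - μ0T) (hΔDne : ΔD ≠ 0)
    (S : Matrix (Fin p) (Fin p) ℝ) (hS : S.PosDef)
    (horth : ΔC ⬝ᵥ (S⁻¹ *ᵥ ΔD) = 0)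
    (γ : ℝ) (hγ : 0 < γ)
    (w : Fin p → ℝ) (hw : w = γ • (S⁻¹ *ᵥ ΔD))
    (b : ℝ) (hb : b = 1/2 - (1/2 : ℝ) * (w ⬝ᵥ (μ0T + μ1S)))
    (Φ : ℝ → ENNReal) (hΦ : ∀ t, Φ t = gaussianReal 0 1 {z | z ≤ t})
    (E0S E0T E1S E1T WGE : ENNReal)
    (hE0S : E0S = gaussianReal (w ⬝ᵥ μ0S + b) (w ⬝ᵥ (S *ᵥ w)).toNNReal {z | 1/2 < z})
    (hE0T : E0T = gaussianReal (w ⬝ᵥ μ0T + b) (w ⬝ᵥ (S *ᵥ w)).toNNReal {z | 1/2 < z})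
    (hE1S : E1S = gaussianReal (w ⬝ᵥ μ1S + b) (w ⬝ᵥ (S *ᵥ w)).toNNReal {z | z ≤ 1/2})
    (hE1T : E1T = gaussianReal (w ⬝ᵥ μ1T + b) (w ⬝ᵥ (S *ᵥ w)).toNNReal {z | z ≤ 1/2})
    (hWGE : WGE = max (max E0S E0T) (max E1S E1T)) :
    E0S = Φ (-Real.sqrt (ΔD ⬝ᵥ (S⁻¹ *ᵥ ΔD)) / 2) ∧
    E0T = Φ (-Real.sqrt (ΔD ⬝ᵥ (S⁻¹ *ᵥ ΔD)) / 2) ∧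
    E1S = Φ (-Real.sqrt (ΔD ⬝ᵥ (S⁻¹ *ᵥ ΔD)) / 2) ∧
    E1T = Φ (-Real.sqrt (ΔD ⬝ᵥ (S⁻¹ *ᵥ ΔD)) / 2) ∧
    WGE = Φ (-Real.sqrt (ΔD ⬝ᵥ (S⁻¹ *ᵥ ΔD)) / 2) := by
  set q : ℝ := ΔD ⬝ᵥ (S⁻¹ *ᵥ ΔD) with hq_def
  -- q > 0
  have hq_pos : 0 < q := by
    have h := hS.inv.dotProduct_mulVec_pos hΔDne
    simpa [hq_def, star] using h
  -- S * S⁻¹ = 1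
  have hSS : S * S⁻¹ = 1 :=
    Matrix.mul_nonsing_inv S (isUnit_iff_ne_zero.mpr hS.det_pos.ne')
  have hsq : Real.sqrt q * Real.sqrt q = q := Real.mul_self_sqrt hq_pos.le
  have hsqrt_pos : 0 < Real.sqrt q := Real.sqrt_pos.mpr hq_pos
  set σ : ℝ := γ * Real.sqrt q with hσ_def
  have hσ : 0 < σ := mul_pos hγ hsqrt_pos
  -- variance
  have hSw : S *ᵥ w = γ • ΔD := by
    rw [hw, Matrix.mulVec_smul, Matrix.mulVec_mulVec, hSS, Matrix.one_mulVec]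
  have hvar : w ⬝ᵥ (S *ᵥ w) = σ ^ 2 := by
    rw [hSw, hw, smul_dotProduct, dotProduct_smul, dotProduct_comm, ← hq_def]
    simp only [smul_eq_mul, hσ_def]
    nlinarith [hsq]
  -- scalar dot product facts
  have hwΔD : w ⬝ᵥ ΔD = γ * q := by
    rw [hw, smul_dotProduct, dotProduct_comm, ← hq_def, smul_eq_mul]
  have hwΔC : w ⬝ᵥ ΔC = 0 := by
    rw [hw, smul_dotProduct, dotProduct_comm, horth, smul_eq_mul, mul_zero]
  have h1 : w ⬝ᵥ μ1S - w ⬝ᵥ μ0S = γ * q := by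
    rw [← dotProduct_sub, ← hΔD, hwΔD]
  have h2 : w ⬝ᵥ μ0S - w ⬝ᵥ μ0T = 0 := by
    rw [← dotProduct_sub, ← hΔC]; exact hwΔC
  have h3 : w ⬝ᵥ μ1S - w ⬝ᵥ μ0S = w ⬝ᵥ μ1T - w ⬝ᵥ μ0T := by
    rw [← dotProduct_sub, ← dotProduct_sub, hmean]
  have hbsum : w ⬝ᵥ (μ0T + μ1S) = w ⬝ᵥ μ0T + w ⬝ᵥ μ1S := dotProduct_add _ _ _
  -- the common standardized value
  have hfrac : (-(γ * q) / 2) / σ = -Real.sqrt q / 2 := by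
    rw [hσ_def]
    field_simp
    nlinarith [hsq]
  -- means
  have hm0S : (w ⬝ᵥ μ0S + b) - 1/2 = -(γ * q) / 2 := by
    rw [hb, hbsum]; linarith
  have hm0T : (w ⬝ᵥ μ0T + b) - 1/2 = -(γ * q) / 2 := by
    rw [hb, hbsum]; linarith
  have hm1S : 1/2 - (w ⬝ᵥ μ1S + b) = -(γ * q) / 2 := by
    rw [hb, hbsum]; linarith
  have hm1T : 1/2 - (w ⬝ᵥ μ1T + b) = -(γ * q) / 2 := by
    rw [hb, hbsum]; linarith
  have e0S : E0S = Φ (-Real.sqrt q / 2) := by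
    rw [hE0S, hvar, aux_std_gt _ _ _ hσ, hΦ, hm0S, hfrac]
  have e0T : E0T = Φ (-Real.sqrt q / 2) := by
    rw [hE0T, hvar, aux_std_gt _ _ _ hσ, hΦ, hm0T, hfrac]
  have e1S : E1S = Φ (-Real.sqrt q / 2) := by
    rw [hE1S, hvar, aux_std_le _ _ _ hσ, hΦ, hm1S, hfrac]
  have e1T : E1T = Φ (-Real.sqrt q / 2) := by
    rw [hE1T, hvar, aux_std_le _ _ _ hσ, hΦ, hm1T, hfrac]
  refine ⟨e0S, e0T, e1S, e1T, ?_⟩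
  rw [hWGE, e0S, e0T, e1S, e1T]
  simp
end

section
/- Let a > 0, b > 0 and 0 < π₀ < 1/4, and set c̃ := (1 − 4π₀)/(1 + 2π₀(1 − 2π₀)·b²). Then (−a² + c̃·b²)/(2√(a² + c̃²·b²)) > −a/2, and consequently Φ((−a² + c̃·b²)/(2√(a² + c̃²·b²))) > Φ(−a/2), where Φ is the standard normal cumulative distribution function. -/
open MeasureTheory ProbabilityTheory

lemma gaussian_cdf_strictMono {t₁ t₂ : ℝ} (h : t₁ < t₂) :
    gaussianReal 0 1 {z | z ≤ t₁} < gaussianReal 0 1 {z | z ≤ t₂} := by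
  have hset : {z : ℝ | z ≤ t₂} = {z : ℝ | z ≤ t₁} ∪ Set.Ioc t₁ t₂ := by
    ext x
    simp only [Set.mem_setOf_eq, Set.mem_union, Set.mem_Ioc]
    constructor
    · intro hx
      rcases le_or_gt x t₁ with h'|h'
      · exact Or.inl h'
      · exact Or.inr ⟨h', hx⟩
    · rintro (hx | ⟨_, hx⟩)
      · exact hx.trans h.le
      · exact hx
  have hdisj : Disjoint {z : ℝ | z ≤ t₁} (Set.Ioc t₁ t₂) := by
    rw [Set.disjoint_left]
    rintro x hx ⟨h1, _⟩
    exact absurd hx (not_le.mpr h1)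
  have hmeas : MeasurableSet (Set.Ioc t₁ t₂) := measurableSet_Ioc
  rw [hset, measure_union hdisj hmeas]
  have hpos : 0 < gaussianReal 0 1 (Set.Ioc t₁ t₂) := by
    rw [pos_iff_ne_zero]
    intro h0
    have habs := gaussianReal_absolutelyContinuous' (0 : ℝ) (v := 1) one_ne_zero
    have := habs h0
    rw [Real.volume_Ioc] at this
    exact (ENNReal.ofReal_pos.mpr (by linarith)).ne' this
  have hfin : gaussianReal 0 1 {z : ℝ | z ≤ t₁} ≠ ⊤ := measure_ne_top _ _
  exact ENNReal.lt_add_right hfin hpos.ne'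

/-- the core inequality of Theorem 2. For `a, b > 0` and `0 < π₀ < 1/4`, with
`c̃ = (1 − 4π₀)/(1 + 2π₀(1 − 2π₀)b²)`, the SRM worst-group-error argument exceeds `−a/2`, and
therefore `Φ((−a² + c̃b²)/(2√(a² + c̃²b²))) > Φ(−a/2)` where `Φ` is the standard normal CDF
(here `Φ t = gaussianReal 0 1 {z | z ≤ t}`). -/
theorem srm_wge_gt_ds_wge
    (a b π₀ : ℝ) (ha : 0 < a) (hb : 0 < b) (hπ₀pos : 0 < π₀) (hπ₀lt : π₀ < 1/4)
    (ctilde : ℝ) (hc : ctilde = (1 - 4 * π₀) / (1 + 2 * π₀ * (1 - 2 * π₀) * b ^ 2))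
    (Φ : ℝ → ENNReal) (hΦ : ∀ t, Φ t = gaussianReal 0 1 {z | z ≤ t}) :
    -a / 2 < (-a ^ 2 + ctilde * b ^ 2) / (2 * Real.sqrt (a ^ 2 + ctilde ^ 2 * b ^ 2)) ∧
    Φ (-a / 2)
      < Φ ((-a ^ 2 + ctilde * b ^ 2) / (2 * Real.sqrt (a ^ 2 + ctilde ^ 2 * b ^ 2))) := by
  have hb2 : 0 < b ^ 2 := by positivity
  have hp2 : 0 < 2 * π₀ * (1 - 2 * π₀) * b ^ 2 := by
    apply mul_pos (by nlinarith) hb2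
  have hden : 0 < 1 + 2 * π₀ * (1 - 2 * π₀) * b ^ 2 := by linarith
  have hcpos : 0 < ctilde := by
    rw [hc]; apply div_pos (by linarith) hden
  have hclt : ctilde < 1 := by
    rw [hc, div_lt_one hden]; linarith
  set s := Real.sqrt (a ^ 2 + ctilde ^ 2 * b ^ 2) with hs
  have hspos : 0 < s := Real.sqrt_pos.mpr (by positivity)
  have hssq : s ^ 2 = a ^ 2 + ctilde ^ 2 * b ^ 2 := Real.sq_sqrt (by positivity)
  have key : -a / 2 < (-a ^ 2 + ctilde * b ^ 2) / (2 * s) := by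
    rw [div_lt_div_iff₀ (by norm_num) (by positivity)]
    have h1 : a ^ 2 - ctilde * b ^ 2 < a * s := by
      rcases lt_or_ge (a ^ 2 - ctilde * b ^ 2) 0 with h|h
      · exact h.trans (by positivity)
      · by_contra hcon
        push_neg at hcon
        have hsq : (a * s) ^ 2 ≤ (a ^ 2 - ctilde * b ^ 2) ^ 2 := by
          nlinarith [mul_pos ha hspos]
        have h2 : ctilde ^ 2 * b ^ 2 * b ^ 2 ≤ ctilde * b ^ 2 * a ^ 2 := by
          nlinarith [mul_pos hcpos hb2]
        nlinarith [hsq, hssq, h2, mul_pos (mul_pos ha ha) (mul_pos hcpos hb2)]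
    nlinarith
  refine ⟨key, ?_⟩
  rw [hΦ, hΦ]
  exact gaussian_cdf_strictMono key
end

section
/- Let a > 0 and b > 0, and for π₀ ∈ [0, 1/4] define c̃(π₀) := (1 − 4π₀)/(1 + 2π₀(1 − 2π₀)·b²) and h(π₀) := (−a² + c̃(π₀)·b²)/(2√(a² + c̃(π₀)²·b²)). Then h is strictly decreasing on the interval [0, 1/4]; in particular h(π₀) > h(1/4) = −a/2 for every π₀ ∈ [0, 1/4). -/
/-- The map `c ↦ (-a² + c b²)/(2√(a² + c² b²))` is strictly monotone on `[0,∞)`. -/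
lemma g_strictMonoOn (a b : ℝ) (ha : 0 < a) (hb : 0 < b) :
    StrictMonoOn (fun c : ℝ => (-a ^ 2 + c * b ^ 2) / (2 * Real.sqrt (a ^ 2 + c ^ 2 * b ^ 2)))
      (Set.Ici (0 : ℝ)) := by
  intro x hx y hy hxy
  simp only [Set.mem_Ici] at hx hy
  have hax : (0:ℝ) < a ^ 2 + x ^ 2 * b ^ 2 := by positivity
  have hay : (0:ℝ) < a ^ 2 + y ^ 2 * b ^ 2 := by positivity
  set sx := Real.sqrt (a ^ 2 + x ^ 2 * b ^ 2) with hsx_def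
  set sy := Real.sqrt (a ^ 2 + y ^ 2 * b ^ 2) with hsy_def
  have hsx : 0 < sx := Real.sqrt_pos.2 hax
  have hsy : 0 < sy := Real.sqrt_pos.2 hay
  have hsx2 : sx ^ 2 = a ^ 2 + x ^ 2 * b ^ 2 := Real.sq_sqrt hax.le
  have hsy2 : sy ^ 2 = a ^ 2 + y ^ 2 * b ^ 2 := Real.sq_sqrt hay.le
  have hsxy : sx ≤ sy := by
    apply Real.sqrt_le_sqrt
    nlinarith [mul_le_mul_of_nonneg_right (mul_self_le_mul_self hx hxy.le) (sq_nonneg b)]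
  simp only
  rw [div_lt_div_iff₀ (by positivity) (by positivity)]
  have key : (x * b ^ 2 - a ^ 2) * sy < (y * b ^ 2 - a ^ 2) * sx := by
    rcases le_or_gt (y * b ^ 2 - a ^ 2) 0 with hR | hR
    · -- both numerators ≤ 0
      have hL : x * b ^ 2 - a ^ 2 < y * b ^ 2 - a ^ 2 := by
        nlinarith [mul_pos (sub_pos.2 hxy) (pow_pos hb 2)]
      nlinarith
    · rcases le_or_gt (x * b ^ 2 - a ^ 2) 0 with hL | hL
      · calc (x * b ^ 2 - a ^ 2) * sy ≤ 0 := mul_nonpos_of_nonpos_of_nonneg hL hsy.le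
          _ < (y * b ^ 2 - a ^ 2) * sx := mul_pos hR hsx
      · -- both positive: compare squares
        have hsq : ((x * b ^ 2 - a ^ 2) * sy) ^ 2 < ((y * b ^ 2 - a ^ 2) * sx) ^ 2 := by
          have e1 : ((x * b ^ 2 - a ^ 2) * sy) ^ 2
              = (x * b ^ 2 - a ^ 2) ^ 2 * (a ^ 2 + y ^ 2 * b ^ 2) := by
            rw [mul_pow, hsy2]
          have e2 : ((y * b ^ 2 - a ^ 2) * sx) ^ 2
              = (y * b ^ 2 - a ^ 2) ^ 2 * (a ^ 2 + x ^ 2 * b ^ 2) := by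
            rw [mul_pow, hsx2]
          rw [e1, e2]
          have hbr : 0 < (x + y) * b ^ 2 + 2 * x * y * b ^ 2 - a ^ 2 * (x + y) - 2 * a ^ 2 := by
            nlinarith [mul_nonneg hy hL.le, mul_nonneg hx hL.le,
              mul_nonneg (mul_nonneg (sub_nonneg.2 hxy.le) hx) (sq_nonneg b),
              mul_pos (sub_pos.2 hxy) (pow_pos hb 2)]
          have hident : (y * b ^ 2 - a ^ 2) ^ 2 * (a ^ 2 + x ^ 2 * b ^ 2)
              - (x * b ^ 2 - a ^ 2) ^ 2 * (a ^ 2 + y ^ 2 * b ^ 2)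
              = a ^ 2 * b ^ 2 * (y - x) *
                ((x + y) * b ^ 2 + 2 * x * y * b ^ 2 - a ^ 2 * (x + y) - 2 * a ^ 2) := by
            ring
          have hpos := mul_pos (mul_pos (mul_pos (pow_pos ha 2) (pow_pos hb 2))
            (sub_pos.2 hxy)) hbr
          linarith [hident, hpos]
        exact lt_of_pow_lt_pow_left₀ 2 (mul_pos hR hsx).le hsq
  nlinarith [key]

/-- the Φ-argument `h(π₀)` of the SRM worst-group error, with
`c̃(π₀) = (1 − 4π₀)/(1 + 2π₀(1 − 2π₀)b²)` and
`h(π₀) = (−a² + c̃(π₀)b²)/(2√(a² + c̃(π₀)²b²))`, is strictly decreasing on `[0, 1/4]`;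
in particular `h(π₀) > h(1/4) = −a/2` for every `π₀ ∈ [0, 1/4)`. -/
theorem srm_error_argument_strictAntiOn
    (a b : ℝ) (ha : 0 < a) (hb : 0 < b)
    (ctilde h : ℝ → ℝ)
    (hc : ∀ π₀, ctilde π₀ = (1 - 4 * π₀) / (1 + 2 * π₀ * (1 - 2 * π₀) * b ^ 2))
    (hh : ∀ π₀, h π₀ = (-a ^ 2 + ctilde π₀ * b ^ 2) /
        (2 * Real.sqrt (a ^ 2 + (ctilde π₀) ^ 2 * b ^ 2))) :
    StrictAntiOn h (Set.Icc (0 : ℝ) (1/4)) ∧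
    (∀ π₀ ∈ Set.Ico (0 : ℝ) (1/4), h (1/4) < h π₀) ∧
    h (1/4) = -a / 2 := by
  have hct_nonneg : ∀ π₀ ∈ Set.Icc (0:ℝ) (1/4), 0 ≤ ctilde π₀ := by
    intro p hp
    obtain ⟨hp0, hp1⟩ := hp
    rw [hc]
    apply div_nonneg (by linarith)
    nlinarith [mul_nonneg (mul_nonneg (by linarith : (0:ℝ) ≤ 2 * p)
      (by linarith : (0:ℝ) ≤ 1 - 2 * p)) (sq_nonneg b)]
  have hct_anti : ∀ x ∈ Set.Icc (0:ℝ) (1/4), ∀ y ∈ Set.Icc (0:ℝ) (1/4),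
      x < y → ctilde y < ctilde x := by
    intro x hx y hy hxy
    obtain ⟨hx0, hx1⟩ := hx
    obtain ⟨hy0, hy1⟩ := hy
    have hdx : (0:ℝ) < 1 + 2 * x * (1 - 2 * x) * b ^ 2 := by
      nlinarith [mul_nonneg (mul_nonneg (by linarith : (0:ℝ) ≤ 2 * x)
        (by linarith : (0:ℝ) ≤ 1 - 2 * x)) (sq_nonneg b)]
    have hdy : (0:ℝ) < 1 + 2 * y * (1 - 2 * y) * b ^ 2 := by
      nlinarith [mul_nonneg (mul_nonneg (by linarith : (0:ℝ) ≤ 2 * y)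
        (by linarith : (0:ℝ) ≤ 1 - 2 * y)) (sq_nonneg b)]
    rw [hc, hc, div_lt_div_iff₀ hdy hdx]
    nlinarith [mul_nonneg (mul_nonneg (sub_nonneg.2 hxy.le) (sq_nonneg b))
        (mul_nonneg (by linarith : (0:ℝ) ≤ 1 - 2 * x) (by linarith : (0:ℝ) ≤ 1 - 2 * y)),
      mul_nonneg (mul_nonneg (mul_nonneg (sub_nonneg.2 hxy.le) (sq_nonneg b)) hx0) hy0]
  have hanti : StrictAntiOn h (Set.Icc (0 : ℝ) (1/4)) := by
    intro x hx y hy hxy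
    rw [hh y, hh x]
    exact g_strictMonoOn a b ha hb (hct_nonneg y hy) (hct_nonneg x hx)
      (hct_anti x hx y hy hxy)
  have hquarter : h (1/4) = -a / 2 := by
    have hc0 : ctilde (1/4) = 0 := by rw [hc]; norm_num
    rw [hh, hc0]
    rw [show a ^ 2 + (0:ℝ) ^ 2 * b ^ 2 = a ^ 2 by ring, Real.sqrt_sq ha.le]
    field_simp
    ring
  refine ⟨hanti, fun p hp => ?_, hquarter⟩
  exact hanti ⟨hp.1, hp.2.le⟩ ⟨by norm_num, le_refl _⟩ hp.2
end
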